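/- arXiv:2304.09509 — 4 statements merged into one kernel-verified Lean document; each statement's English description precedes it below -/
import Mathlib

section
/- Let F : ℝⁿ × P(ℝⁿ) → ℝ be bounded, continuous in x for each μ and weakly continuous in μ for each x; set c(μ) := inf_{z∈ℝⁿ} F(z,μ) and C_F := sup_{z,μ} (F(z,μ) − c(μ)). Let 𝒜 ⊆ ℝⁿ be nonempty and closed with F(a,μ) = c(μ) for every a ∈ 𝒜 and every μ ∈ P(ℝⁿ). Let T > 0, let m : [0,T] → P(ℝⁿ) be narrowly continuous, and let u be the associated value function. Then for every x ∈ ℝⁿ and t ∈ [0,T]: ∫_t^T c(m(s)) ds ≤ u(x,t) ≤ (1/2 + C_F)·dist(x,𝒜) + ∫_t^T c(m(s)) ds. In particular u(x̄,t) = ∫_t^T c(m(s)) ds for every x̄ ∈ 𝒜. -/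
open MeasureTheory Set Filter Metric

noncomputable section

abbrev En (n : ℕ) : Type := EuclideanSpace ℝ (Fin n)
abbrev Pn (n : ℕ) : Type := MeasureTheory.ProbabilityMeasure (En n)

/-- Action functional on the time interval `[t,T]`. -/
def action {n : ℕ} (F : En n → Pn n → ℝ) (m : ℝ → Pn n) (t T : ℝ) (y : ℝ → En n) : ℝ :=
  ∫ s in t..T, (‖deriv y s‖ ^ 2 / 2 + F (y s) (m s))

/-- Admissible curves on `[t,T]` starting at `x`. -/
def Adm {n : ℕ} (t T : ℝ) (x : En n) (y : ℝ → En n) : Prop :=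
  (∃ L : NNReal, LipschitzOnWith L y (Set.Icc t T)) ∧ y t = x

/-- Value function of the optimal control problem with horizon `T` and measure flow `m`. -/
def valueFun {n : ℕ} (F : En n → Pn n → ℝ) (m : ℝ → Pn n) (T : ℝ) (x : En n) (t : ℝ) : ℝ :=
  sInf {c | ∃ y : ℝ → En n, Adm t T x y ∧ c = action F m t T y}

/-- `cmin F μ` is the infimum of `F (·, μ)`. -/
def cmin {n : ℕ} (F : En n → Pn n → ℝ) (μ : Pn n) : ℝ := ⨅ z : En n, F z μ

lemma ae_ne_const (c : ℝ) : ∀ᵐ s ∂(volume : Measure ℝ), s ≠ c := by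
  have h : {s : ℝ | ¬ s ≠ c} = {c} := by ext s; simp
  rw [ae_iff, h]
  exact measure_singleton c

lemma abs_min_sub_min_le (p q c : ℝ) : |min p c - min q c| ≤ |p - q| := by
  have h3 := le_abs_self (p - q)
  have h4 := neg_abs_le (p - q)
  rcases le_total p c with h1 | h1 <;> rcases le_total q c with h2 | h2 <;>
    rw [abs_le] <;> constructor <;>
    simp only [min_eq_left h1, min_eq_right h1, min_eq_left h2, min_eq_right h2] <;> linarith

lemma measurable_comp_countable {α : Type*} [MeasurableSpace α] [MeasurableSingletonClass α]
    (φ : ℝ → α) (hφ : Measurable φ) (hc : (Set.range φ).Countable)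
    (g : α → ℝ → ℝ) (hg : ∀ a, Measurable (g a)) :
    Measurable fun s => g (φ s) s := by
  intro B hB
  have h : (fun s => g (φ s) s) ⁻¹' B = ⋃ a ∈ Set.range φ, (φ ⁻¹' {a} ∩ (g a) ⁻¹' B) := by
    ext s
    simp only [Set.mem_preimage, Set.mem_iUnion, Set.mem_inter_iff, Set.mem_singleton_iff]
    constructor
    · intro h; exact ⟨φ s, Set.mem_range_self s, rfl, h⟩
    · rintro ⟨a, -, rfl, h⟩; exact h
  rw [h]
  exact MeasurableSet.biUnion hc fun a _ => (hφ (measurableSet_singleton a)).inter (hg a hB)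

section Fbounds

variable {n : ℕ} (F : En n → Pn n → ℝ) (M : ℝ)

lemma bddBelow_F (hM : ∀ (x : En n) (μ : Pn n), |F x μ| ≤ M) (μ : Pn n) :
    BddBelow (Set.range fun z : En n => F z μ) := by
  refine ⟨-M, ?_⟩
  rintro _ ⟨z, rfl⟩
  linarith [(abs_le.1 (hM z μ)).1]

lemma cmin_le_F (hM : ∀ (x : En n) (μ : Pn n), |F x μ| ≤ M) (z : En n) (μ : Pn n) :
    cmin F μ ≤ F z μ := ciInf_le (bddBelow_F F M hM μ) z

lemma abs_cmin_le (hM : ∀ (x : En n) (μ : Pn n), |F x μ| ≤ M) (μ : Pn n) :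
    |cmin F μ| ≤ M := by
  refine abs_le.2 ⟨le_ciInf fun z => (abs_le.1 (hM z μ)).1,
    le_trans (cmin_le_F F M hM 0 μ) (abs_le.1 (hM 0 μ)).2⟩

lemma cmin_eq_iInf_seq (hM : ∀ (x : En n) (μ : Pn n), |F x μ| ≤ M)
    (hFx : ∀ μ : Pn n, Continuous fun x => F x μ) (μ : Pn n) :
    cmin F μ = ⨅ i : ℕ, F (TopologicalSpace.denseSeq (En n) i) μ := by
  have bddB : BddBelow (Set.range fun i : ℕ => F (TopologicalSpace.denseSeq (En n) i) μ) := by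
    refine ⟨-M, ?_⟩
    rintro _ ⟨i, rfl⟩
    linarith [(abs_le.1 (hM (TopologicalSpace.denseSeq (En n) i) μ)).1]
  refine le_antisymm (le_ciInf fun i => cmin_le_F F M hM _ μ) (le_ciInf fun z => ?_)
  refine le_of_forall_pos_le_add fun ε hε => ?_
  have hO : IsOpen {w : En n | F w μ < F z μ + ε} := isOpen_lt (hFx μ) continuous_const
  have hz : z ∈ {w : En n | F w μ < F z μ + ε} := by simp [hε]
  obtain ⟨i, hi⟩ := (TopologicalSpace.denseRange_denseSeq (En n)).exists_mem_open hO ⟨z, hz⟩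
  exact (ciInf_le bddB i).trans hi.le

end Fbounds

lemma aesm_F_comp {n : ℕ} (F : En n → Pn n → ℝ)
    (hFx : ∀ μ : Pn n, Continuous fun x => F x μ)
    (hFm : ∀ x : En n, Continuous fun μ : Pn n => F x μ)
    (mc : ℝ → Pn n) (hmc : Continuous mc)
    (t T : ℝ) (htT : t ≤ T)
    (y : ℝ → En n) (hy : ContinuousOn y (Set.Icc t T)) :
    AEStronglyMeasurable (fun s => F (y s) (mc s)) (volume.restrict (Set.Ioc t T)) := by
  classical
  set clamp : ℝ → ℝ := fun u => max t (min T u) with hclampdef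
  have hclampmem : ∀ u, clamp u ∈ Set.Icc t T :=
    fun u => ⟨le_max_left _ _, max_le htT (min_le_left _ _)⟩
  have hclampc : Continuous clamp := continuous_const.max (continuous_const.min continuous_id)
  have hclampid : ∀ u ∈ Set.Icc t T, clamp u = u := by
    intro u hu
    simp only [hclampdef]
    rw [min_eq_right hu.2, max_eq_right hu.1]
  set r : ℕ → ℝ → ℝ := fun k s => clamp ((⌊((k : ℝ) + 1) * s⌋ : ℝ) / ((k : ℝ) + 1)) with hrdef
  have hrmono : ∀ k : ℕ, Monotone (r k) := by
    intro k s s' hss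
    have hK : (0 : ℝ) < (k : ℝ) + 1 := by positivity
    have h1 : ((k : ℝ) + 1) * s ≤ ((k : ℝ) + 1) * s' := by nlinarith
    have h2 : (⌊((k : ℝ) + 1) * s⌋ : ℝ) ≤ (⌊((k : ℝ) + 1) * s'⌋ : ℝ) := by
      exact_mod_cast Int.floor_le_floor h1
    have h3 : (⌊((k : ℝ) + 1) * s⌋ : ℝ) / ((k : ℝ) + 1) ≤ (⌊((k : ℝ) + 1) * s'⌋ : ℝ) / ((k : ℝ) + 1) := by
      gcongr
    exact max_le_max le_rfl (min_le_min le_rfl h3)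
  have hrange : ∀ k : ℕ, (Set.range (r k)).Countable := by
    intro k
    have hsub : Set.range (r k) ⊆ Set.range (fun j : ℤ => clamp ((j : ℝ) / ((k : ℝ) + 1))) := by
      rintro _ ⟨s, rfl⟩
      exact ⟨⌊((k : ℝ) + 1) * s⌋, rfl⟩
    exact Set.Countable.mono hsub (Set.countable_range _)
  have hmeask : ∀ k : ℕ, Measurable fun s => F (y (r k s)) (mc s) := by
    intro k
    exact measurable_comp_countable (r k) (hrmono k).measurable (hrange k)
      (fun a s => F (y a) (mc s)) (fun a => ((hFm (y a)).comp hmc).measurable)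
  have hlim : ∀ s ∈ Set.Ioc t T,
      Filter.Tendsto (fun k : ℕ => F (y (r k s)) (mc s)) Filter.atTop (nhds (F (y s) (mc s))) := by
    intro s hs
    have hsIcc : s ∈ Set.Icc t T := ⟨hs.1.le, hs.2⟩
    have h1 : Filter.Tendsto (fun k : ℕ => (⌊((k : ℝ) + 1) * s⌋ : ℝ) / ((k : ℝ) + 1))
        Filter.atTop (nhds s) := by
      have hub : ∀ k : ℕ, (⌊((k : ℝ) + 1) * s⌋ : ℝ) / ((k : ℝ) + 1) ≤ s := by
        intro k
        have hK : (0 : ℝ) < (k : ℝ) + 1 := by positivity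
        rw [div_le_iff₀ hK]
        calc (⌊((k : ℝ) + 1) * s⌋ : ℝ) ≤ ((k : ℝ) + 1) * s := Int.floor_le _
          _ = s * ((k : ℝ) + 1) := by ring
      have hlb : ∀ k : ℕ, s - 1 / ((k : ℝ) + 1) ≤ (⌊((k : ℝ) + 1) * s⌋ : ℝ) / ((k : ℝ) + 1) := by
        intro k
        have hK : (0 : ℝ) < (k : ℝ) + 1 := by positivity
        rw [le_div_iff₀ hK]
        have hfl := Int.sub_one_lt_floor (((k : ℝ) + 1) * s)
        have hexp : (s - 1 / ((k : ℝ) + 1)) * ((k : ℝ) + 1) = ((k : ℝ) + 1) * s - 1 := by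
          field_simp
        rw [hexp]
        linarith
      have hlo : Filter.Tendsto (fun k : ℕ => s - 1 / ((k : ℝ) + 1)) Filter.atTop (nhds s) := by
        have := tendsto_one_div_add_atTop_nhds_zero_nat (𝕜 := ℝ)
        have h := (tendsto_const_nhds (x := s) (f := Filter.atTop (α := ℕ))).sub this
        simpa using h
      exact tendsto_of_tendsto_of_tendsto_of_le_of_le hlo tendsto_const_nhds hlb hub
    have h2 : Filter.Tendsto (fun k : ℕ => r k s) Filter.atTop (nhds s) := by
      have := (hclampc.tendsto _).comp h1
      rw [hclampid s hsIcc] at this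
      exact this
    have h3 : Filter.Tendsto (fun k : ℕ => r k s) Filter.atTop (nhdsWithin s (Set.Icc t T)) :=
      tendsto_nhdsWithin_of_tendsto_nhds_of_eventually_within _ h2
        (Filter.Eventually.of_forall fun k => hclampmem _)
    have h4 : Filter.Tendsto (fun k : ℕ => y (r k s)) Filter.atTop (nhds (y s)) :=
      (hy s hsIcc).tendsto.comp h3
    exact ((hFx (mc s)).tendsto (y s)).comp h4
  refine aestronglyMeasurable_of_tendsto_ae Filter.atTop
    (fun k => (hmeask k).aestronglyMeasurable) ?_
  exact (ae_restrict_iff' measurableSet_Ioc).2 (Filter.Eventually.of_forall fun s hs => hlim s hs)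

lemma cmin_II {n : ℕ} (F : En n → Pn n → ℝ) (M : ℝ)
    (hM : ∀ (x : En n) (μ : Pn n), |F x μ| ≤ M)
    (hFx : ∀ μ : Pn n, Continuous fun x => F x μ)
    (hFm : ∀ x : En n, Continuous fun μ : Pn n => F x μ)
    (T t : ℝ) (ht0 : 0 ≤ t) (htT : t ≤ T)
    (m mc : ℝ → Pn n) (hmc : Continuous mc)
    (hmeq : ∀ s ∈ Set.Icc (0:ℝ) T, mc s = m s) :
    IntervalIntegrable (fun s => cmin F (m s)) volume t T := by
  rw [intervalIntegrable_iff_integrableOn_Ioc_of_le htT]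
  have hmeas : Measurable fun s => cmin F (mc s) := by
    have h : (fun s => cmin F (mc s))
        = fun s => ⨅ i : ℕ, F (TopologicalSpace.denseSeq (En n) i) (mc s) :=
      funext fun s => cmin_eq_iInf_seq F M hM hFx (mc s)
    rw [h]
    exact Measurable.iInf fun i => ((hFm _).comp hmc).measurable
  have hint : IntegrableOn (fun s => cmin F (mc s)) (Set.Ioc t T) volume := by
    refine Integrable.mono' (g := fun _ => M) (integrableOn_const measure_Ioc_lt_top.ne)
      hmeas.aestronglyMeasurable (ae_of_all _ fun s => ?_)
    rw [Real.norm_eq_abs]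
    exact abs_cmin_le F M hM _
  exact hint.congr_fun (fun s hs => by show cmin F (mc s) = cmin F (m s); rw [hmeq s ⟨ht0.trans hs.1.le, hs.2⟩]) measurableSet_Ioc

lemma integrand_II {n : ℕ} (F : En n → Pn n → ℝ) (M : ℝ)
    (hM : ∀ (x : En n) (μ : Pn n), |F x μ| ≤ M)
    (hFx : ∀ μ : Pn n, Continuous fun x => F x μ)
    (hFm : ∀ x : En n, Continuous fun μ : Pn n => F x μ)
    (T t : ℝ) (ht0 : 0 ≤ t) (htT : t ≤ T)
    (m mc : ℝ → Pn n) (hmc : Continuous mc)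
    (hmeq : ∀ s ∈ Set.Icc (0:ℝ) T, mc s = m s)
    (y : ℝ → En n) (L : NNReal) (hy : LipschitzOnWith L y (Set.Icc t T)) :
    IntervalIntegrable (fun s => ‖deriv y s‖ ^ 2 / 2 + F (y s) (m s)) volume t T := by
  rw [intervalIntegrable_iff_integrableOn_Ioc_of_le htT]
  have hIoc : Set.Ioc t T ⊆ Set.Icc 0 T := fun s hs => ⟨ht0.trans hs.1.le, hs.2⟩
  have hsm : AEStronglyMeasurable (fun s => ‖deriv y s‖ ^ 2 / 2 + F (y s) (m s))
      (volume.restrict (Set.Ioc t T)) := by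
    have h1 : Measurable fun s => ‖deriv y s‖ ^ 2 / 2 :=
      ((measurable_deriv y).norm.pow_const 2).div_const 2
    have h2 := aesm_F_comp F hFx hFm mc hmc t T htT y hy.continuousOn
    have h2' : AEStronglyMeasurable (fun s => F (y s) (m s)) (volume.restrict (Set.Ioc t T)) := by
      refine h2.congr ?_
      exact (ae_restrict_iff' measurableSet_Ioc).2
        (ae_of_all _ fun s hs => by show F (y s) (mc s) = F (y s) (m s); rw [hmeq s (hIoc hs)])
    exact h1.aestronglyMeasurable.add h2'
  refine Integrable.mono' (g := fun _ => (L : ℝ) ^ 2 / 2 + M)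
    (integrableOn_const measure_Ioc_lt_top.ne) hsm ?_
  have hae : ∀ᵐ s ∂(volume.restrict (Set.Ioc t T)), s ≠ T := ae_restrict_of_ae (ae_ne_const T)
  refine (hae.and (ae_restrict_mem measurableSet_Ioc)).mono ?_
  rintro s ⟨hsT, hs⟩
  have hds : ‖deriv y s‖ ≤ (L : ℝ) :=
    norm_deriv_le_of_lipschitzOn (Icc_mem_nhds hs.1 (lt_of_le_of_ne hs.2 hsT)) hy
  have hF := abs_le.1 (hM (y s) (m s))
  have h0 : (0 : ℝ) ≤ ‖deriv y s‖ ^ 2 / 2 := by positivity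
  have hsq : ‖deriv y s‖ ^ 2 ≤ (L : ℝ) ^ 2 := by nlinarith [norm_nonneg (deriv y s)]
  rw [Real.norm_eq_abs]
  calc |‖deriv y s‖ ^ 2 / 2 + F (y s) (m s)|
      ≤ |‖deriv y s‖ ^ 2 / 2| + |F (y s) (m s)| := abs_add_le _ _
    _ = ‖deriv y s‖ ^ 2 / 2 + |F (y s) (m s)| := by rw [abs_of_nonneg h0]
    _ ≤ (L : ℝ) ^ 2 / 2 + M := by
        have habs := hM (y s) (m s)
        linarith

/-- **Two-sided bounds for the value function in the presence of a common minimizing set.**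
With `c(μ) = inf_z F(z,μ)`, `F(z,μ) − c(μ) ≤ C_F`, and a nonempty closed set `𝒜` on which
`F(a,μ) = c(μ)` for every `μ`, the value function satisfies
`∫_t^T c(m(s)) ds ≤ u(x,t) ≤ (1/2 + C_F)·dist(x,𝒜) + ∫_t^T c(m(s)) ds`;
in particular `u(x̄,t) = ∫_t^T c(m(s)) ds` for `x̄ ∈ 𝒜`. -/
theorem value_function_bounds_common_argmin {n : ℕ} (F : En n → Pn n → ℝ)
    (M : ℝ) (hM : ∀ (x : En n) (μ : Pn n), |F x μ| ≤ M)
    (hFx : ∀ μ : Pn n, Continuous fun x => F x μ)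
    (hFm : ∀ x : En n, Continuous fun μ : Pn n => F x μ)
    (C_F : ℝ) (hCF : ∀ (z : En n) (μ : Pn n), F z μ - cmin F μ ≤ C_F)
    (𝒜 : Set (En n)) (hA_ne : 𝒜.Nonempty) (hA_closed : IsClosed 𝒜)
    (hA_min : ∀ a ∈ 𝒜, ∀ μ : Pn n, F a μ = cmin F μ)
    (T : ℝ) (hT : 0 < T)
    (m : ℝ → Pn n) (hm : ContinuousOn m (Set.Icc 0 T)) :
    ∀ (x : En n) (t : ℝ), t ∈ Set.Icc (0:ℝ) T →
      ((∫ s in t..T, cmin F (m s)) ≤ valueFun F m T x t ∧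
        valueFun F m T x t ≤
          (1/2 + C_F) * Metric.infDist x 𝒜 + ∫ s in t..T, cmin F (m s)) ∧
      (x ∈ 𝒜 → valueFun F m T x t = ∫ s in t..T, cmin F (m s)) := by
  intro x t ht
  obtain ⟨ht0, htT⟩ := ht
  classical
  -- globally continuous modification of m
  set mc : ℝ → Pn n := fun s => m (max 0 (min T s)) with hmcdef
  have hc0mem : ∀ u : ℝ, max 0 (min T u) ∈ Set.Icc (0:ℝ) T :=
    fun u => ⟨le_max_left _ _, max_le hT.le (min_le_left _ _)⟩
  have hmc : Continuous mc := by
    have h := hm.comp_continuous (continuous_const.max (continuous_const.min continuous_id)) hc0mem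
    · exact h
  have hmeq : ∀ s ∈ Set.Icc (0:ℝ) T, mc s = m s := by
    intro s hs
    simp only [hmcdef]
    rw [min_eq_right hs.2, max_eq_right hs.1]
  have hIcmin : IntervalIntegrable (fun s => cmin F (m s)) volume t T :=
    cmin_II F M hM hFx hFm T t ht0 htT m mc hmc hmeq
  have hII : ∀ (y : ℝ → En n) (L : NNReal), LipschitzOnWith L y (Set.Icc t T) →
      IntervalIntegrable (fun s => ‖deriv y s‖ ^ 2 / 2 + F (y s) (m s)) volume t T :=
    fun y L hy => integrand_II F M hM hFx hFm T t ht0 htT m mc hmc hmeq y L hy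
  set S := {c | ∃ y : ℝ → En n, Adm t T x y ∧ c = action F m t T y} with hSdef
  have hvS : valueFun F m T x t = sInf S := rfl
  -- lower bound for every element of S
  have hlowS : ∀ c ∈ S, (∫ s in t..T, cmin F (m s)) ≤ c := by
    rintro c ⟨y, ⟨⟨L, hL⟩, -⟩, rfl⟩
    refine intervalIntegral.integral_mono_on htT hIcmin (hII y L hL) fun s _ => ?_
    have h2 : cmin F (m s) ≤ F (y s) (m s) := cmin_le_F F M hM _ _
    have h3 : (0:ℝ) ≤ ‖deriv y s‖ ^ 2 / 2 := by positivity
    linarith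
  have hc₀ : action F m t T (fun _ => x) ∈ S :=
    ⟨fun _ => x, ⟨⟨0, (LipschitzWith.const x).lipschitzOnWith⟩, rfl⟩, rfl⟩
  have hSne : S.Nonempty := ⟨_, hc₀⟩
  have hbdd : BddBelow S := ⟨_, fun c hc => hlowS c hc⟩
  have hlower : (∫ s in t..T, cmin F (m s)) ≤ valueFun F m T x t := by
    rw [hvS]; exact le_csInf hSne hlowS
  -- distance attained
  obtain ⟨a, haA, hdist⟩ := hA_closed.exists_infDist_eq_dist hA_ne x
  set d := Metric.infDist x 𝒜 with hddef
  have hd0 : 0 ≤ d := Metric.infDist_nonneg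
  have hCF0 : 0 ≤ C_F := by
    have hμ : Pn n := ⟨MeasureTheory.Measure.dirac a, by infer_instance⟩
    have h := hCF a hμ
    rw [hA_min a haA hμ] at h
    linarith
  have hupper : valueFun F m T x t ≤ (1/2 + C_F) * d + ∫ s in t..T, cmin F (m s) := by
    rcases eq_or_lt_of_le hd0 with hd0' | hd0'
    · -- d = 0, so x = a ∈ 𝒜 : constant curve with exactly minimal cost
      have hxa : x = a := dist_eq_zero.1 (by rw [← hdist]; exact hd0'.symm)
      have hxA : x ∈ 𝒜 := hxa ▸ haA
      have hact : action F m t T (fun _ => x) = ∫ s in t..T, cmin F (m s) := by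
        unfold action
        refine intervalIntegral.integral_congr fun s _ => ?_
        rw [deriv_const']
        rw [hA_min x hxA (m s)]
        simp
      rw [hvS]
      calc sInf S ≤ action F m t T (fun _ => x) := csInf_le hbdd hc₀
        _ = ∫ s in t..T, cmin F (m s) := hact
        _ ≤ (1/2 + C_F) * d + ∫ s in t..T, cmin F (m s) := by
            rw [← hd0']; simp
    · by_cases hdT : d ≤ T - t
      · -- travel to a at unit speed, then stay
        set v : En n := d⁻¹ • (a - x) with hvdef
        have hax : ‖a - x‖ = d := by rw [← dist_eq_norm, dist_comm, ← hdist]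
        have hnv : ‖v‖ = 1 := by
          rw [hvdef, norm_smul, norm_inv, Real.norm_eq_abs, abs_of_pos hd0', hax]
          exact inv_mul_cancel₀ (ne_of_gt hd0')
        set y : ℝ → En n := fun s => x + (min (s - t) d) • v with hydef
        have hysub : ∀ s1 s2 : ℝ, y s1 - y s2 = (min (s1 - t) d - min (s2 - t) d) • v := by
          intro s1 s2
          simp only [hydef]
          rw [sub_smul]
          abel
        have hlip : LipschitzWith 1 y := by
          refine LipschitzWith.of_dist_le_mul fun s1 s2 => ?_
          rw [dist_eq_norm, hysub, norm_smul, hnv, mul_one, Real.norm_eq_abs,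
            NNReal.coe_one, one_mul, Real.dist_eq]
          have h := abs_min_sub_min_le (s1 - t) (s2 - t) d
          have he : s1 - t - (s2 - t) = s1 - s2 := by ring
          rwa [he] at h
        have hyt : y t = x := by
          simp only [hydef, sub_self, min_eq_left hd0, zero_smul, add_zero]
        have hmemS : action F m t T y ∈ S := ⟨y, ⟨⟨1, hlip.lipschitzOnWith⟩, hyt⟩, rfl⟩
        have hder1 : ∀ s, s < t + d → deriv y s = v := by
          intro s hs
          have hev : (fun u => x + (u - t) • v) =ᶠ[nhds s] y := by
            filter_upwards [Iio_mem_nhds hs] with u hu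
            simp only [hydef]
            rw [min_eq_left (by have := Set.mem_Iio.1 hu; linarith)]
          have hda' : HasDerivAt (fun u => x + (u - t) • v) v s := by
            have h := (((hasDerivAt_id s).sub_const t).smul_const v).const_add x
            simpa using h
          exact (hda'.congr_of_eventuallyEq hev.symm).deriv
        have hder2 : ∀ s, t + d < s → deriv y s = 0 := by
          intro s hs
          have hev : (fun _ : ℝ => x + d • v) =ᶠ[nhds s] y := by
            filter_upwards [Ioi_mem_nhds hs] with u hu
            simp only [hydef]
            rw [min_eq_right (by have := Set.mem_Ioi.1 hu; linarith)]
          exact (((hasDerivAt_const s (x + d • v))).congr_of_eventuallyEq hev.symm).deriv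
        have hya : ∀ s, t + d ≤ s → y s = a := by
          intro s hs
          simp only [hydef]
          rw [min_eq_right (by linarith), hvdef, smul_smul,
            mul_inv_cancel₀ (ne_of_gt hd0'), one_smul]
          abel
        -- the comparison function
        set g : ℝ → ℝ := fun s =>
          cmin F (m s) + Set.indicator (Set.Ioc t (t + d)) (fun _ => 1/2 + C_F) s with hgdef
        have hindII : IntervalIntegrable
            (fun s => Set.indicator (Set.Ioc t (t + d)) (fun _ : ℝ => 1/2 + C_F) s)
            volume t T := by
          rw [intervalIntegrable_iff_integrableOn_Ioc_of_le htT]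
          have hbase : IntegrableOn (fun _ : ℝ => 1/2 + C_F) (Set.Ioc t T) volume :=
            integrableOn_const measure_Ioc_lt_top.ne
          exact hbase.indicator measurableSet_Ioc
        have hgI : IntervalIntegrable g volume t T := hIcmin.add hindII
        have hyII := hII y 1 (hlip.lipschitzOnWith)
        have hmono : action F m t T y ≤ ∫ s in t..T, g s := by
          unfold action
          refine intervalIntegral.integral_mono_ae_restrict htT hyII hgI ?_
          have h12 : ∀ᵐ s ∂(volume : Measure ℝ), s ≠ t ∧ s ≠ t + d :=
            (ae_ne_const t).and (ae_ne_const (t + d))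
          refine ((ae_restrict_of_ae h12).and (ae_restrict_mem measurableSet_Icc)).mono ?_
          rintro s ⟨⟨hs1, hs2⟩, hsmem⟩
          rcases lt_or_gt_of_ne hs2 with hlt | hgt
          · have hdd := hder1 s hlt
            have hFb : F (y s) (m s) ≤ cmin F (m s) + C_F := by linarith [hCF (y s) (m s)]
            have hind : Set.indicator (Set.Ioc t (t + d)) (fun _ : ℝ => 1/2 + C_F) s
                = 1/2 + C_F :=
              Set.indicator_of_mem (Set.mem_Ioc.2 ⟨lt_of_le_of_ne hsmem.1 (Ne.symm hs1), hlt.le⟩) (fun _ : ℝ => 1/2 + C_F)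
            show ‖deriv y s‖ ^ 2 / 2 + F (y s) (m s) ≤ g s
            rw [hdd, hnv]
            simp only [hgdef]
            rw [hind]
            norm_num
            linarith
          · have hdd := hder2 s hgt
            have hind : (0:ℝ) ≤ Set.indicator (Set.Ioc t (t + d)) (fun _ : ℝ => 1/2 + C_F) s :=
              Set.indicator_nonneg (fun _ _ => by linarith) s
            show ‖deriv y s‖ ^ 2 / 2 + F (y s) (m s) ≤ g s
            rw [hdd, hya s hgt.le]
            simp only [hgdef, norm_zero]
            norm_num
            linarith [hA_min a haA (m s), hind]
        have hgval : (∫ s in t..T, g s)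
            = (∫ s in t..T, cmin F (m s)) + (1/2 + C_F) * d := by
          simp only [hgdef]
          rw [intervalIntegral.integral_add hIcmin hindII]
          congr 1
          rw [intervalIntegral.integral_of_le htT]
          rw [setIntegral_indicator measurableSet_Ioc]
          have hss : Set.Ioc t T ∩ Set.Ioc t (t + d) = Set.Ioc t (t + d) := by
            refine Set.inter_eq_self_of_subset_right (Set.Ioc_subset_Ioc_right (by linarith))
          rw [hss, setIntegral_const, Real.volume_real_Ioc_of_le (by linarith), add_sub_cancel_left,
            smul_eq_mul]
          ring
        rw [hvS]
        calc sInf S ≤ action F m t T y := csInf_le hbdd hmemS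
          _ ≤ ∫ s in t..T, g s := hmono
          _ = (∫ s in t..T, cmin F (m s)) + (1/2 + C_F) * d := hgval
          _ = (1/2 + C_F) * d + ∫ s in t..T, cmin F (m s) := by ring
      · -- not enough time : stay put
        have hTt : T - t < d := not_le.1 hdT
        have h1 := hII (fun _ => x) 0 ((LipschitzWith.const x).lipschitzOnWith)
        have hconst : IntervalIntegrable (fun _ : ℝ => C_F) volume t T :=
          intervalIntegrable_const
        have hmono : action F m t T (fun _ => x) ≤ ∫ s in t..T, (cmin F (m s) + C_F) := by
          unfold action
          refine intervalIntegral.integral_mono_on htT h1 (hIcmin.add hconst) fun s _ => ?_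
          have h2 : F x (m s) ≤ cmin F (m s) + C_F := by linarith [hCF x (m s)]
          rw [deriv_const']
          simpa using h2
        have hsplit : (∫ s in t..T, (cmin F (m s) + C_F))
            = (∫ s in t..T, cmin F (m s)) + C_F * (T - t) := by
          rw [intervalIntegral.integral_add hIcmin hconst, intervalIntegral.integral_const,
            smul_eq_mul]
          ring
        have hfin : C_F * (T - t) ≤ (1/2 + C_F) * d := by
          have e1 : C_F * (T - t) ≤ C_F * d := mul_le_mul_of_nonneg_left hTt.le hCF0
          have e2 : (1/2 + C_F) * d = d/2 + C_F * d := by ring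
          linarith
        rw [hvS]
        calc sInf S ≤ action F m t T (fun _ => x) := csInf_le hbdd hc₀
          _ ≤ ∫ s in t..T, (cmin F (m s) + C_F) := hmono
          _ = (∫ s in t..T, cmin F (m s)) + C_F * (T - t) := hsplit
          _ ≤ (1/2 + C_F) * d + ∫ s in t..T, cmin F (m s) := by linarith
  refine ⟨⟨hlower, hupper⟩, fun hxA => ?_⟩
  have h0 : d = 0 := Metric.infDist_zero_of_mem hxA
  refine le_antisymm ?_ hlower
  calc valueFun F m T x t ≤ (1/2 + C_F) * d + ∫ s in t..T, cmin F (m s) := hupper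
    _ = ∫ s in t..T, cmin F (m s) := by rw [h0]; ring
end
end

section
/- In the setting of the occupational estimate, assume additionally that there is γ : (0,∞) → (0,∞) such that F(z,μ) − c(μ) ≥ γ(r) for every μ ∈ P(ℝⁿ) whenever dist(z,𝒜) > r, and that the minimizer y* is Lipschitz with constant χ' > 0. Then for every r > 0 there exists T₀ > 0, depending only on r, χ', γ(r), γ(r/2), C_F and dist(x,𝒜) (and nonincreasing in none of these beyond that dependence), such that for every horizon T ≥ T₀ one has dist(y*(t), 𝒜) ≤ r for all t ∈ [T₀ − r/(2χ'), T]. -/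
open MeasureTheory Set Filter Metric
open Topology

noncomputable section

lemma floor_div_tendsto (s : ℝ) :
    Tendsto (fun k : ℕ => ((⌊s * 2 ^ k⌋ : ℤ) : ℝ) / 2 ^ k) atTop (𝓝 s) := by
  have h2 : ∀ k : ℕ, (0:ℝ) < 2 ^ k := fun k => by positivity
  refine tendsto_of_tendsto_of_tendsto_of_le_of_le
    (g := fun k : ℕ => s - ((2:ℝ) ^ k)⁻¹) (h := fun _ : ℕ => s) ?_ tendsto_const_nhds ?_ ?_
  · have : Tendsto (fun k : ℕ => ((2:ℝ) ^ k)⁻¹) atTop (𝓝 0) :=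
      tendsto_inv_atTop_zero.comp (tendsto_pow_atTop_atTop_of_one_lt one_lt_two)
    simpa using tendsto_const_nhds.sub this
  · intro k
    have h1 : s * 2 ^ k - 1 ≤ (⌊s * 2 ^ k⌋ : ℝ) := (Int.sub_one_lt_floor _).le
    rw [sub_le_iff_le_add, div_add' _ _ _ (h2 k).ne', le_div_iff₀ (h2 k)]
    calc s * 2 ^ k ≤ (⌊s * 2 ^ k⌋ : ℝ) + 1 := by linarith
    _ = (⌊s * 2 ^ k⌋ + ((2:ℝ)^k)⁻¹ * 2 ^ k) := by
        rw [inv_mul_cancel₀ (h2 k).ne']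
  · intro k
    rw [div_le_iff₀ (h2 k)]
    exact (Int.floor_le _)

lemma measurable_F_comp {n : ℕ} (F : En n → Pn n → ℝ)
    (hFx : ∀ μ : Pn n, Continuous fun x => F x μ)
    (hFm : ∀ x : En n, Continuous fun μ : Pn n => F x μ)
    (u : ℝ → En n) (hu : Continuous u) (v : ℝ → Pn n) (hv : Continuous v) :
    Measurable fun s => F (u s) (v s) := by
  have hmeas : ∀ k : ℕ, Measurable fun s => F (u (((⌊s * 2 ^ k⌋ : ℤ):ℝ) / 2 ^ k)) (v s) := by
    intro k
    have h1 : Measurable fun p : ℝ × ℤ => F (u ((p.2 : ℝ) / 2 ^ k)) (v p.1) :=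
      measurable_from_prod_countable_left fun j =>
        ((hFm (u ((j : ℝ) / 2 ^ k))).comp hv).measurable
    exact h1.comp (measurable_id.prodMk (Int.measurable_floor.comp (measurable_id.mul_const _)))
  refine measurable_of_tendsto_metrizable hmeas ?_
  rw [tendsto_pi_nhds]
  intro s
  have hcont : Tendsto (fun t => F (u t) (v s)) (𝓝 s) (𝓝 (F (u s) (v s))) :=
    ((hFx (v s)).comp hu).continuousAt
  exact hcont.comp (floor_div_tendsto s)

lemma lipschitzOnWith_glue {E : Type*} [PseudoMetricSpace E] {f : ℝ → E} {L : NNReal}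
    {a b c : ℝ} (hab : a ≤ b) (hbc : b ≤ c)
    (h1 : LipschitzOnWith L f (Icc a b)) (h2 : LipschitzOnWith L f (Icc b c)) :
    LipschitzOnWith L f (Icc a c) := by
  rw [lipschitzOnWith_iff_dist_le_mul] at h1 h2 ⊢
  have key : ∀ s ∈ Icc a c, ∀ t ∈ Icc a c, s ≤ t → dist (f s) (f t) ≤ L * dist s t := by
    intro s hs t ht hst
    rcases le_total t b with h | h
    · exact h1 s ⟨hs.1, hst.trans h⟩ t ⟨hs.1.trans hst, h⟩
    rcases le_total b s with h' | h'
    · exact h2 s ⟨h', hs.2⟩ t ⟨h'.trans hst, ht.2⟩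
    · calc dist (f s) (f t) ≤ dist (f s) (f b) + dist (f b) (f t) := dist_triangle _ _ _
        _ ≤ L * dist s b + L * dist b t :=
          add_le_add (h1 s ⟨hs.1, h'⟩ b ⟨hab, le_refl b⟩) (h2 b ⟨le_refl b, hbc⟩ t ⟨h, ht.2⟩)
        _ = L * (dist s b + dist b t) := by ring
        _ ≤ L * dist s t := by
            have : dist s b + dist b t = dist s t := by
              rw [Real.dist_eq, Real.dist_eq, Real.dist_eq,
                abs_of_nonpos (by linarith), abs_of_nonpos (by linarith),
                abs_of_nonpos (by linarith)]
              ring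
            rw [this]
  intro s hs t ht
  rcases le_total s t with h | h
  · exact key s hs t ht h
  · rw [dist_comm, dist_comm s t]; exact key t ht s hs h

lemma norm_deriv_le_of_lip {E : Type*} [NormedAddCommGroup E] [NormedSpace ℝ E] {L : NNReal}
    {f : ℝ → E} {a b : ℝ} (hf : LipschitzOnWith L f (Icc a b)) {s : ℝ} (hs : s ∈ Ioo a b) :
    ‖deriv f s‖ ≤ L := by
  by_cases hd : DifferentiableAt ℝ f s
  · have h1 : ‖fderiv ℝ f s‖ ≤ L :=
      norm_fderiv_le_of_lipschitzOn ℝ (Icc_mem_nhds hs.1 hs.2) hf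
    have h2 : deriv f s = fderiv ℝ f s 1 := rfl
    calc ‖deriv f s‖ = ‖fderiv ℝ f s 1‖ := by rw [h2]
      _ ≤ ‖fderiv ℝ f s‖ * ‖(1:ℝ)‖ := ContinuousLinearMap.le_opNorm _ _
      _ ≤ L := by simpa using h1
  · rw [deriv_zero_of_not_differentiableAt hd]
    simp [L.coe_nonneg]

lemma LipschitzOnWith.congr' {E : Type*} [PseudoEMetricSpace E] {K : NNReal} {f g : ℝ → E}
    {s : Set ℝ} (h : LipschitzOnWith K f s) (he : EqOn g f s) : LipschitzOnWith K g s := by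
  intro x hx y hy
  rw [he hx, he hy]
  exact h hx hy

lemma LipschitzOnWith.weaken' {E : Type*} [PseudoEMetricSpace E] {K K' : NNReal} {f : ℝ → E}
    {s : Set ℝ} (h : LipschitzOnWith K f s) (hK : K ≤ K') : LipschitzOnWith K' f s :=
  fun x hx y hy => (h hx hy).trans (mul_le_mul_left (ENNReal.coe_le_coe.2 hK) _)

lemma clampT_mem {T : ℝ} (hT : 0 ≤ T) (s : ℝ) : max 0 (min s T) ∈ Icc 0 T :=
  ⟨le_max_left _ _, max_le hT (min_le_right _ _)⟩

lemma clampT_eq {T : ℝ} {s : ℝ} (hs : s ∈ Icc 0 T) : max 0 (min s T) = s := by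
  rw [min_eq_left hs.2, max_eq_right hs.1]

lemma continuous_clampT (T : ℝ) : Continuous (fun s : ℝ => max 0 (min s T)) :=
  continuous_const.max (continuous_id.min continuous_const)

lemma integrable_parts {n : ℕ} (F : En n → Pn n → ℝ) (M : ℝ)
    (hM : ∀ (x : En n) (μ : Pn n), |F x μ| ≤ M)
    (hFx : ∀ μ : Pn n, Continuous fun x => F x μ)
    (hFm : ∀ x : En n, Continuous fun μ : Pn n => F x μ)
    {T : ℝ} (hT : 0 ≤ T) {m : ℝ → Pn n} (hm : ContinuousOn m (Icc 0 T))
    {u : ℝ → En n} {L : NNReal} (hu : LipschitzOnWith L u (Icc 0 T)) :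
    IntervalIntegrable (fun s => ‖deriv u s‖ ^ 2 / 2) volume 0 T ∧
    IntervalIntegrable (fun s => F (u s) (m s)) volume 0 T := by
  constructor
  · rw [intervalIntegrable_iff_integrableOn_Ioo_of_le hT]
    have hmeas : Measurable fun s => ‖deriv u s‖ ^ 2 / 2 :=
      ((measurable_deriv u).norm.pow_const 2).div_const 2
    refine Integrable.mono' (integrable_const ((L : ℝ) ^ 2 / 2)) hmeas.aestronglyMeasurable ?_
    filter_upwards [ae_restrict_mem measurableSet_Ioo] with s hs
    rw [Real.norm_eq_abs, abs_of_nonneg (by positivity)]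
    have h1 := norm_deriv_le_of_lip hu hs
    have h0 : (0:ℝ) ≤ ‖deriv u s‖ := norm_nonneg _
    gcongr
  · rw [intervalIntegrable_iff_integrableOn_Icc_of_le hT]
    have hcl : ∀ s, max 0 (min s T) ∈ Icc 0 T := clampT_mem hT
    have hu2 : Continuous fun s : ℝ => u (max 0 (min s T)) :=
      hu.continuousOn.comp_continuous (continuous_clampT T) hcl
    have hm2 : Continuous fun s : ℝ => m (max 0 (min s T)) :=
      hm.comp_continuous (continuous_clampT T) hcl
    have hg : Measurable fun s : ℝ => F (u (max 0 (min s T))) (m (max 0 (min s T))) :=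
      measurable_F_comp F hFx hFm _ hu2 _ hm2
    have hint : IntegrableOn (fun s : ℝ => F (u (max 0 (min s T))) (m (max 0 (min s T))))
        (Icc 0 T) := by
      refine Integrable.mono' (integrable_const M) hg.aestronglyMeasurable.restrict ?_
      filter_upwards with s
      rw [Real.norm_eq_abs]
      exact hM _ _
    refine hint.congr_fun (fun s hs => ?_) measurableSet_Icc
    dsimp only
    rw [clampT_eq hs]

lemma key_bound {n : ℕ} (F : En n → Pn n → ℝ) (M : ℝ)
    (hM : ∀ (x : En n) (μ : Pn n), |F x μ| ≤ M)
    (hFx : ∀ μ : Pn n, Continuous fun x => F x μ)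
    (hFm : ∀ x : En n, Continuous fun μ : Pn n => F x μ)
    (C_F : ℝ) (hCF : ∀ (z : En n) (μ : Pn n), F z μ - cmin F μ ≤ C_F)
    (𝒜 : Set (En n)) (hA_min : ∀ a ∈ 𝒜, ∀ μ : Pn n, F a μ = cmin F μ)
    (a₀ : En n) (ha₀ : a₀ ∈ 𝒜)
    (x : En n) (χ' : ℝ)
    (T σ τ ρ : ℝ) (hσ0 : 0 ≤ σ) (hτ : 0 < τ) (hστ : σ + τ ≤ T)
    (m : ℝ → Pn n) (hm : ContinuousOn m (Icc 0 T))
    (w : ℝ → En n) (hw : LipschitzOnWith (Real.toNNReal χ') w (Icc 0 T)) (hw0 : w 0 = x)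
    (hmin : ∀ y : ℝ → En n, Adm 0 T x y → action F m 0 T w ≤ action F m 0 T y)
    (a : En n) (ha : a ∈ 𝒜) (hρ : 0 ≤ ρ) (hd : ‖a - w σ‖ ≤ ρ * τ) :
    ∫ s in σ..T, (‖deriv w s‖ ^ 2 / 2 + (F (w s) (m s) - F a₀ (m s)))
      ≤ (ρ ^ 2 / 2 + C_F) * τ := by
  have hστ' : σ ≤ σ + τ := by linarith
  have hσT : σ ≤ T := by linarith
  have hτT : σ + τ ≤ T := hστ
  have hT : (0:ℝ) ≤ T := hσ0.trans hσT
  set v : En n := τ⁻¹ • (a - w σ) with hv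
  set lin : ℝ → En n := fun s => w σ + (s - σ) • v with hlin
  set z : ℝ → En n := fun s => if s ≤ σ then w s else if s ≤ σ + τ then lin s else a with hz
  have hvnorm : ‖v‖ ≤ ρ := by
    rw [hv, norm_smul, norm_inv, Real.norm_eq_abs, abs_of_pos hτ]
    calc τ⁻¹ * ‖a - w σ‖ ≤ τ⁻¹ * (ρ * τ) := by
          apply mul_le_mul_of_nonneg_left hd (by positivity)
      _ = ρ := by field_simp
  -- equalities on pieces
  have hz1 : EqOn z w (Icc 0 σ) := fun s hs => by simp only [hz, if_pos hs.2]
  have hz2 : EqOn z lin (Icc σ (σ + τ)) := by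
    intro s hs
    rcases eq_or_lt_of_le hs.1 with h | h
    · simp only [hz, ← h, le_refl, if_pos, hlin]
      simp
    · simp only [hz, if_neg (not_le.2 h), if_pos hs.2]
  have hlinval : lin (σ + τ) = a := by
    rw [hlin]
    simp only [add_sub_cancel_left]
    rw [hv, smul_smul, mul_inv_cancel₀ hτ.ne', one_smul]
    simp
  have hz3 : EqOn z (fun _ => a) (Icc (σ + τ) T) := by
    intro s hs
    show (if s ≤ σ then w s else if s ≤ σ + τ then lin s else a) = a
    rcases eq_or_lt_of_le hs.1 with h | h
    · rw [if_neg (not_le.2 (by linarith)), if_pos (le_of_eq h.symm)]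
      rw [← h, hlinval]
    · rw [if_neg (not_le.2 (by linarith)), if_neg (not_le.2 h)]
  -- Lipschitz property of z
  set L' : NNReal := Real.toNNReal χ' ⊔ Real.toNNReal ρ with hL'
  have hlinlip : LipschitzWith (Real.toNNReal ρ) lin := by
    apply LipschitzWith.of_dist_le_mul
    intro s t
    rw [hlin]
    simp only [dist_eq_norm, add_sub_add_left_eq_sub, ← sub_smul]
    have : s - σ - (t - σ) = s - t := by ring
    rw [this, norm_smul, Real.norm_eq_abs, Real.coe_toNNReal ρ hρ]
    calc |s - t| * ‖v‖ ≤ |s - t| * ρ := mul_le_mul_of_nonneg_left hvnorm (abs_nonneg _)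
      _ = ρ * |s - t| := mul_comm _ _
  have hzlip : LipschitzOnWith L' z (Icc 0 T) := by
    apply lipschitzOnWith_glue hσ0 (hστ'.trans hτT)
    · exact ((hw.mono (Icc_subset_Icc le_rfl hσT)).weaken' le_sup_left).congr' hz1
    · apply lipschitzOnWith_glue hστ' hτT
      · exact ((LipschitzOnWith.weaken'
          (hlinlip.lipschitzOnWith (s := Icc σ (σ + τ))) le_sup_right).congr' hz2)
      · exact (LipschitzOnWith.weaken'
          ((LipschitzWith.const a).lipschitzOnWith (s := Icc (σ + τ) T)) (by simp)).congr' hz3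
  have hAdm : Adm 0 T x z := by
    refine ⟨⟨L', hzlip⟩, ?_⟩
    rw [hz1 ⟨le_rfl, hσ0⟩, hw0]
  -- integrability
  obtain ⟨hwkin, hwF⟩ := integrable_parts F M hM hFx hFm hT hm hw
  obtain ⟨hzkin, hzF⟩ := integrable_parts F M hM hFx hFm hT hm hzlip
  have hcint : IntervalIntegrable (fun s => F a₀ (m s)) volume 0 T := by
    apply ContinuousOn.intervalIntegrable
    rw [uIcc_of_le hT]
    exact (hFm a₀).comp_continuousOn hm
  have hΦw : IntervalIntegrable (fun s => ‖deriv w s‖ ^ 2 / 2 + F (w s) (m s)) volume 0 T :=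
    hwkin.add hwF
  have hΦz : IntervalIntegrable (fun s => ‖deriv z s‖ ^ 2 / 2 + F (z s) (m s)) volume 0 T :=
    hzkin.add hzF
  have hsub : ∀ (α β : ℝ), 0 ≤ α → α ≤ β → β ≤ T →
      ∀ g : ℝ → ℝ, IntervalIntegrable g volume 0 T → IntervalIntegrable g volume α β := by
    intro α β h0 h1 h2 g hg
    exact hg.mono_set (by rw [uIcc_of_le (h1), uIcc_of_le hT]; exact Icc_subset_Icc h0 h2)
  -- step C : equality on [0,σ]
  have hne : ∀ᵐ s : ℝ, s ≠ σ := by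
    filter_upwards [compl_mem_ae_iff.2 (measure_singleton σ)] with s hs
    simpa using hs
  have stepC : (∫ s in (0:ℝ)..σ, (‖deriv z s‖ ^ 2 / 2 + F (z s) (m s)))
      = ∫ s in (0:ℝ)..σ, (‖deriv w s‖ ^ 2 / 2 + F (w s) (m s)) := by
    apply intervalIntegral.integral_congr_ae
    filter_upwards [hne] with s hs hmem
    rw [uIoc_of_le hσ0] at hmem
    have hlt : s < σ := lt_of_le_of_ne hmem.2 hs
    have hderiv : deriv z s = deriv w s := by
      apply Filter.EventuallyEq.deriv_eq
      filter_upwards [Ioo_mem_nhds hmem.1 hlt] with t ht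
      exact hz1 ⟨ht.1.le, ht.2.le⟩
    rw [hderiv, hz1 ⟨hmem.1.le, hmem.2⟩]
  -- step D : middle piece
  have hcmid : IntervalIntegrable (fun s => F a₀ (m s)) volume σ (σ + τ) :=
    hsub σ (σ + τ) hσ0 hστ' hτT _ hcint
  have stepD : (∫ s in σ..(σ + τ), (‖deriv z s‖ ^ 2 / 2 + F (z s) (m s)))
      ≤ (ρ ^ 2 / 2 + C_F) * τ + ∫ s in σ..(σ + τ), F a₀ (m s) := by
    have hmono := intervalIntegral.integral_mono_ae_restrict (μ := volume) hστ'
      (hsub σ (σ + τ) hσ0 hστ' hτT _ hΦz)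
      ((intervalIntegrable_const (c := ρ ^ 2 / 2 + C_F)).add hcmid) ?_
    · calc (∫ s in σ..(σ + τ), (‖deriv z s‖ ^ 2 / 2 + F (z s) (m s)))
          ≤ ∫ s in σ..(σ + τ), ((ρ ^ 2 / 2 + C_F) + F a₀ (m s)) := hmono
        _ = (ρ ^ 2 / 2 + C_F) * τ + ∫ s in σ..(σ + τ), F a₀ (m s) := by
            rw [intervalIntegral.integral_add intervalIntegrable_const hcmid,
              intervalIntegral.integral_const]
            simp [smul_eq_mul]
            ring
    · rw [← Measure.restrict_congr_set Ioo_ae_eq_Icc]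
      filter_upwards [ae_restrict_mem measurableSet_Ioo] with s hs
      have hderiv : deriv z s = v := by
        have hl : HasDerivAt lin v s := by
          have h₁ : HasDerivAt (fun t : ℝ => t - σ) 1 s := (hasDerivAt_id s).sub_const σ
          have h₂ := h₁.smul_const v
          rw [one_smul] at h₂
          exact h₂.const_add (w σ)
        have hzl : HasDerivAt z v s := by
          apply hl.congr_of_eventuallyEq
          filter_upwards [Ioo_mem_nhds hs.1 hs.2] with t ht
          exact hz2 ⟨ht.1.le, ht.2.le⟩
        exact hzl.deriv
      have hFz : F (z s) (m s) ≤ C_F + F a₀ (m s) := by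
        have h1 := hCF (z s) (m s)
        have h2 := hA_min a₀ ha₀ (m s)
        linarith
      have hkin : ‖deriv z s‖ ^ 2 / 2 ≤ ρ ^ 2 / 2 := by
        rw [hderiv]
        nlinarith [hvnorm, norm_nonneg v]
      linarith
  -- step E : tail piece
  have stepE : (∫ s in (σ + τ)..T, (‖deriv z s‖ ^ 2 / 2 + F (z s) (m s)))
      = ∫ s in (σ + τ)..T, F a₀ (m s) := by
    apply intervalIntegral.integral_congr_ae
    apply Eventually.of_forall
    intro s hs
    rw [uIoc_of_le hτT] at hs
    have hderiv : deriv z s = 0 := by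
      have heq : z =ᶠ[𝓝 s] (fun _ => a) := by
        filter_upwards [Ioi_mem_nhds hs.1] with t ht
        show (if t ≤ σ then w t else if t ≤ σ + τ then lin t else a) = a
        have htt : σ + τ < t := mem_Ioi.1 ht
        rw [if_neg (not_le.2 (by linarith)), if_neg (not_le.2 htt)]
      rw [heq.deriv_eq, deriv_const]
    have hzz : z s = a := by
      show (if s ≤ σ then w s else if s ≤ σ + τ then lin s else a) = a
      rw [if_neg (not_le.2 (by linarith [hs.1])), if_neg (not_le.2 hs.1)]
    rw [hderiv, hzz, hA_min a ha (m s), ← hA_min a₀ ha₀ (m s)]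
    simp
  -- assembly
  have hact : (∫ s in (0:ℝ)..T, (‖deriv w s‖ ^ 2 / 2 + F (w s) (m s)))
      ≤ ∫ s in (0:ℝ)..T, (‖deriv z s‖ ^ 2 / 2 + F (z s) (m s)) := hmin z hAdm
  have hsplitw : (∫ s in (0:ℝ)..T, (‖deriv w s‖ ^ 2 / 2 + F (w s) (m s)))
      = (∫ s in (0:ℝ)..σ, (‖deriv w s‖ ^ 2 / 2 + F (w s) (m s)))
        + ∫ s in σ..T, (‖deriv w s‖ ^ 2 / 2 + F (w s) (m s)) :=
    (intervalIntegral.integral_add_adjacent_intervals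
      (hsub 0 σ le_rfl hσ0 hσT _ hΦw) (hsub σ T hσ0 hσT le_rfl _ hΦw)).symm
  have hsplitz : (∫ s in (0:ℝ)..T, (‖deriv z s‖ ^ 2 / 2 + F (z s) (m s)))
      = (∫ s in (0:ℝ)..σ, (‖deriv z s‖ ^ 2 / 2 + F (z s) (m s)))
        + ((∫ s in σ..(σ + τ), (‖deriv z s‖ ^ 2 / 2 + F (z s) (m s)))
        + ∫ s in (σ + τ)..T, (‖deriv z s‖ ^ 2 / 2 + F (z s) (m s))) := by
    rw [intervalIntegral.integral_add_adjacent_intervals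
      (hsub σ (σ + τ) hσ0 hστ' hτT _ hΦz) (hsub (σ + τ) T (hσ0.trans hστ') hτT le_rfl _ hΦz),
      intervalIntegral.integral_add_adjacent_intervals
      (hsub 0 σ le_rfl hσ0 hσT _ hΦz) (hsub σ T hσ0 hσT le_rfl _ hΦz)]
  have hsplitc : (∫ s in σ..(σ + τ), F a₀ (m s)) + (∫ s in (σ + τ)..T, F a₀ (m s))
      = ∫ s in σ..T, F a₀ (m s) :=
    intervalIntegral.integral_add_adjacent_intervals hcmid
      (hsub (σ + τ) T (hσ0.trans hστ') hτT le_rfl _ hcint)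
  have hgoal : (∫ s in σ..T, (‖deriv w s‖ ^ 2 / 2 + F (w s) (m s)))
      - (∫ s in σ..T, F a₀ (m s)) ≤ (ρ ^ 2 / 2 + C_F) * τ := by
    rw [hsplitw, hsplitz, stepC] at hact
    linarith [stepD, stepE, hsplitc]
  have heq : (∫ s in σ..T, (‖deriv w s‖ ^ 2 / 2 + (F (w s) (m s) - F a₀ (m s))))
      = (∫ s in σ..T, (‖deriv w s‖ ^ 2 / 2 + F (w s) (m s)))
        - ∫ s in σ..T, F a₀ (m s) := by
    rw [← intervalIntegral.integral_sub (hsub σ T hσ0 hσT le_rfl _ hΦw)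
      (hsub σ T hσ0 hσT le_rfl _ hcint)]
    congr 1
    funext s
    ring
  rw [heq]
  exact hgoal

set_option maxHeartbeats 1000000 in
/-- **Optimal trajectories eventually stay near the common minimizing set.**
Under the hypotheses of the occupational estimate, assume additionally that
`F(z,μ) − c(μ) ≥ γ(r)` whenever `dist(z,𝒜) > r` (with `γ(r) > 0`), and that the minimizers are
Lipschitz with a common constant `χ' > 0`. Then for every `r > 0` there exists `T₀ > 0`,
depending only on the fixed data, such that for every horizon `T ≥ T₀`, every narrowly
continuous flow `m` and every χ'-Lipschitz action minimizer `y*` from `x`,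
`dist(y*(t), 𝒜) ≤ r` for all `t ∈ [T₀ − r/(2χ'), T]`. -/
theorem trajectories_near_argmin {n : ℕ} (F : En n → Pn n → ℝ)
    (M : ℝ) (hM : ∀ (x : En n) (μ : Pn n), |F x μ| ≤ M)
    (hFx : ∀ μ : Pn n, Continuous fun x => F x μ)
    (hFm : ∀ x : En n, Continuous fun μ : Pn n => F x μ)
    (C_F : ℝ) (hCF : ∀ (z : En n) (μ : Pn n), F z μ - cmin F μ ≤ C_F)
    (𝒜 : Set (En n)) (hA_ne : 𝒜.Nonempty) (hA_closed : IsClosed 𝒜)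
    (hA_min : ∀ a ∈ 𝒜, ∀ μ : Pn n, F a μ = cmin F μ)
    (γ : ℝ → ℝ) (hγ_pos : ∀ r : ℝ, 0 < r → 0 < γ r)
    (hγ : ∀ r : ℝ, 0 < r → ∀ (z : En n) (μ : Pn n),
      r < Metric.infDist z 𝒜 → γ r ≤ F z μ - cmin F μ)
    (χ' : ℝ) (hχ' : 0 < χ')
    (x : En n) :
    ∀ r : ℝ, 0 < r → ∃ T₀ : ℝ, 0 < T₀ ∧
      ∀ T : ℝ, T₀ ≤ T → ∀ m : ℝ → Pn n, ContinuousOn m (Set.Icc 0 T) →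
        ∀ ystar : ℝ → En n,
          LipschitzOnWith (Real.toNNReal χ') ystar (Set.Icc 0 T) → ystar 0 = x →
          (∀ y : ℝ → En n, Adm 0 T x y → action F m 0 T ystar ≤ action F m 0 T y) →
          ∀ t ∈ Set.Icc (T₀ - r / (2 * χ')) T, Metric.infDist (ystar t) 𝒜 ≤ r := by
  -- preliminaries
  have hd0 : (0:ℝ) ≤ infDist x 𝒜 := infDist_nonneg
  obtain ⟨a₀, ha₀, ha₀d⟩ : ∃ a₀ ∈ 𝒜, dist x a₀ < infDist x 𝒜 + 1 :=
    (infDist_lt_iff hA_ne).1 (by linarith)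
  have hcmin_le : ∀ (z : En n) (μ : Pn n), cmin F μ ≤ F z μ := by
    intro z μ
    apply ciInf_le
    exact ⟨-M, fun y hy => by obtain ⟨z', rfl⟩ := hy; linarith [(abs_le.1 (hM z' μ)).1]⟩
  have hCF0 : 0 ≤ C_F := by
    let μ0 : Pn n := ⟨MeasureTheory.Measure.dirac x, MeasureTheory.Measure.dirac.isProbabilityMeasure⟩
    have h1 := hCF a₀ μ0
    have h2 := hA_min a₀ ha₀ μ0
    linarith
  intro r hr
  set ℓ : ℝ := r / (2 * χ') with hℓ
  have hℓpos : 0 < ℓ := by positivity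
  have hγ2 : 0 < γ (r / 2) := hγ_pos _ (by linarith)
  set δ : ℝ := min ℓ (γ (r / 2) * ℓ / (2 * (2 + C_F))) with hδ
  have hδpos : 0 < δ := lt_min hℓpos (by positivity)
  have hδℓ : δ ≤ ℓ := min_le_left _ _
  have hδsmall : (2 + C_F) * δ ≤ γ (r / 2) * ℓ / 2 := by
    have h1 : δ ≤ γ (r / 2) * ℓ / (2 * (2 + C_F)) := min_le_right _ _
    have h2 : (0:ℝ) < 2 + C_F := by linarith
    calc (2 + C_F) * δ ≤ (2 + C_F) * (γ (r / 2) * ℓ / (2 * (2 + C_F))) := by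
          exact mul_le_mul_of_nonneg_left h1 h2.le
      _ = γ (r / 2) * ℓ / 2 := by field_simp
  have hγδ : 0 < γ δ := hγ_pos δ hδpos
  set τ₀ : ℝ := (infDist x 𝒜 + 1) / χ' with hτ₀def
  have hτ₀ : 0 < τ₀ := div_pos (by linarith) hχ'
  set K : ℝ := (χ' ^ 2 / 2 + C_F) * τ₀ with hK
  have hK0 : 0 ≤ K := mul_nonneg (by nlinarith [sq_nonneg χ']) hτ₀.le
  refine ⟨K / γ δ + 2 * ℓ + τ₀ + 1, by positivity, ?_⟩
  intro T hT m hm ystar hlip hy0 hminy t ht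
  have hKγ : 0 ≤ K / γ δ := div_nonneg hK0 hγδ.le
  have hT0 : (0:ℝ) ≤ T := le_trans (by linarith) hT
  by_contra hcon
  push_neg at hcon
  -- integrability facts
  obtain ⟨hkin, hFint⟩ := integrable_parts F M hM hFx hFm hT0 hm hlip
  have hcint : IntervalIntegrable (fun s => F a₀ (m s)) volume 0 T := by
    apply ContinuousOn.intervalIntegrable
    rw [uIcc_of_le hT0]
    exact (hFm a₀).comp_continuousOn hm
  have hh : IntervalIntegrable (fun s => F (ystar s) (m s) - F a₀ (m s)) volume 0 T :=
    hFint.sub hcint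
  have hsub : ∀ (α β : ℝ), 0 ≤ α → α ≤ β → β ≤ T →
      ∀ g : ℝ → ℝ, IntervalIntegrable g volume 0 T → IntervalIntegrable g volume α β := by
    intro α β h0 h1 h2 g hg
    exact hg.mono_set (by rw [uIcc_of_le h1, uIcc_of_le hT0]; exact Icc_subset_Icc h0 h2)
  have hh0 : ∀ s, 0 ≤ F (ystar s) (m s) - F a₀ (m s) := by
    intro s
    have := hcmin_le (ystar s) (m s)
    have h2 := hA_min a₀ ha₀ (m s)
    linarith
  -- baseline energy bound
  have hbase : (∫ s in (0:ℝ)..T, (‖deriv ystar s‖ ^ 2 / 2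
      + (F (ystar s) (m s) - F a₀ (m s)))) ≤ K := by
    have h := key_bound F M hM hFx hFm C_F hCF 𝒜 hA_min a₀ ha₀ x χ' T 0 τ₀ χ'
      le_rfl hτ₀ (by linarith [ht.1, ht.2, hℓpos]) m hm ystar hlip hy0 hminy a₀ ha₀ hχ'.le
      (by rw [hy0]
          have : ‖a₀ - x‖ = dist x a₀ := by rw [dist_eq_norm, norm_sub_rev]
          rw [this, hτ₀def]
          field_simp
          linarith)
    rw [hK]
    exact h
  have hsplitability : IntervalIntegrable (fun s => ‖deriv ystar s‖ ^ 2 / 2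
      + (F (ystar s) (m s) - F a₀ (m s))) volume 0 T := hkin.add hh
  have hEbound : (∫ s in (0:ℝ)..T, (F (ystar s) (m s) - F a₀ (m s))) ≤ K := by
    have heq : (∫ s in (0:ℝ)..T, (‖deriv ystar s‖ ^ 2 / 2
        + (F (ystar s) (m s) - F a₀ (m s))))
        = (∫ s in (0:ℝ)..T, ‖deriv ystar s‖ ^ 2 / 2)
          + ∫ s in (0:ℝ)..T, (F (ystar s) (m s) - F a₀ (m s)) :=
      intervalIntegral.integral_add hkin hh
    have hknn : 0 ≤ ∫ s in (0:ℝ)..T, ‖deriv ystar s‖ ^ 2 / 2 :=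
      intervalIntegral.integral_nonneg hT0 (fun u _ => by positivity)
    linarith
  -- t facts
  have ht1 : K / γ δ + τ₀ + 1 ≤ t - ℓ := by
    have := ht.1
    linarith
  have htℓ0 : 0 ≤ t - ℓ := by linarith
  have htT : t ≤ T := ht.2
  -- find σ close to the set
  have hσex : ∃ σ ∈ Icc (0:ℝ) (t - ℓ), infDist (ystar σ) 𝒜 ≤ δ := by
    by_contra hno
    push_neg at hno
    have hmono : γ δ * (t - ℓ) ≤ ∫ s in (0:ℝ)..(t - ℓ), (F (ystar s) (m s) - F a₀ (m s)) := by
      have hconst : (∫ s in (0:ℝ)..(t - ℓ), γ δ) = γ δ * (t - ℓ) := by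
        rw [intervalIntegral.integral_const, smul_eq_mul, sub_zero, mul_comm]
      rw [← hconst]
      apply intervalIntegral.integral_mono_on htℓ0 intervalIntegrable_const
        (hsub 0 (t - ℓ) le_rfl htℓ0 (by linarith) _ hh)
      intro s hs
      have hfar := hno s hs
      have := hγ δ hδpos (ystar s) (m s) hfar
      rw [hA_min a₀ ha₀ (m s)]
      linarith
    have hup : (∫ s in (0:ℝ)..(t - ℓ), (F (ystar s) (m s) - F a₀ (m s)))
        ≤ ∫ s in (0:ℝ)..T, (F (ystar s) (m s) - F a₀ (m s)) := by
      have hadd := intervalIntegral.integral_add_adjacent_intervals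
        (hsub 0 (t - ℓ) le_rfl htℓ0 (by linarith) _ hh)
        (hsub (t - ℓ) T htℓ0 (by linarith) le_rfl _ hh)
      have hnn : 0 ≤ ∫ s in (t - ℓ)..T, (F (ystar s) (m s) - F a₀ (m s)) :=
        intervalIntegral.integral_nonneg (by linarith) (fun u _ => hh0 u)
      linarith
    have hmul : γ δ * (K / γ δ + τ₀ + 1) ≤ γ δ * (t - ℓ) :=
      mul_le_mul_of_nonneg_left ht1 hγδ.le
    have hcanc : γ δ * (K / γ δ) = K := by field_simp
    nlinarith [hγδ, hτ₀]
  obtain ⟨σ, hσmem, hσδ⟩ := hσex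
  obtain ⟨a, haA, hadist⟩ := (infDist_lt_iff hA_ne).1
    (show infDist (ystar σ) 𝒜 < 2 * δ by linarith)
  -- refined energy bound from time σ
  have hkey2 : (∫ s in σ..T, (‖deriv ystar s‖ ^ 2 / 2
      + (F (ystar s) (m s) - F a₀ (m s)))) ≤ (2 + C_F) * δ := by
    have h := key_bound F M hM hFx hFm C_F hCF 𝒜 hA_min a₀ ha₀ x χ' T σ δ 2
      hσmem.1 hδpos (by linarith [hσmem.2]) m hm ystar hlip hy0 hminy a haA (by norm_num)
      (by have : ‖a - ystar σ‖ = dist (ystar σ) a := by rw [dist_eq_norm, norm_sub_rev]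
          rw [this]
          linarith)
    calc (∫ s in σ..T, (‖deriv ystar s‖ ^ 2 / 2 + (F (ystar s) (m s) - F a₀ (m s))))
        ≤ ((2:ℝ) ^ 2 / 2 + C_F) * δ := h
      _ = (2 + C_F) * δ := by norm_num
  -- lower bound on the same quantity
  have hσT : σ ≤ T := by linarith [hσmem.2]
  have hmid : γ (r / 2) * ℓ ≤ ∫ s in (t - ℓ)..t, (F (ystar s) (m s) - F a₀ (m s)) := by
    have hconst : (∫ s in (t - ℓ)..t, γ (r / 2)) = γ (r / 2) * ℓ := by
      rw [intervalIntegral.integral_const, smul_eq_mul, sub_sub_cancel, mul_comm]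
    rw [← hconst]
    apply intervalIntegral.integral_mono_ae_restrict (by linarith) intervalIntegrable_const
      (hsub (t - ℓ) t htℓ0 (by linarith) htT _ hh)
    rw [← Measure.restrict_congr_set Ioo_ae_eq_Icc]
    filter_upwards [ae_restrict_mem measurableSet_Ioo] with s hs
    have hsIcc : s ∈ Icc (0:ℝ) T := ⟨by linarith [hs.1], by linarith [hs.2]⟩
    have htIcc : t ∈ Icc (0:ℝ) T := ⟨by linarith, htT⟩
    have hdist : dist (ystar s) (ystar t) ≤ χ' * (t - s) := by
      have h1 := (lipschitzOnWith_iff_dist_le_mul.1 hlip) s hsIcc t htIcc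
      rw [Real.coe_toNNReal χ' hχ'.le, Real.dist_eq,
        abs_of_nonpos (by linarith [hs.2] : s - t ≤ 0)] at h1
      calc dist (ystar s) (ystar t) ≤ χ' * -(s - t) := h1
        _ = χ' * (t - s) := by ring
    have hinf : r / 2 < infDist (ystar s) 𝒜 := by
      have h1 : infDist (ystar t) 𝒜 ≤ infDist (ystar s) 𝒜 + dist (ystar t) (ystar s) :=
        infDist_le_infDist_add_dist
      rw [dist_comm] at h1
      have h2 : χ' * (t - s) < χ' * ℓ := by
        apply mul_lt_mul_of_pos_left _ hχ'
        linarith [hs.1]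
      have hχℓ : χ' * ℓ = r / 2 := by
        rw [hℓ]
        field_simp
      linarith
    have := hγ (r / 2) (by linarith) (ystar s) (m s) hinf
    rw [hA_min a₀ ha₀ (m s)]
    linarith
  have hlower : γ (r / 2) * ℓ ≤ ∫ s in σ..T, (F (ystar s) (m s) - F a₀ (m s)) := by
    have hadd1 := intervalIntegral.integral_add_adjacent_intervals
      (hsub σ (t - ℓ) hσmem.1 hσmem.2 (by linarith) _ hh)
      (hsub (t - ℓ) t htℓ0 (by linarith) htT _ hh)
    have hadd2 := intervalIntegral.integral_add_adjacent_intervals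
      (hsub σ t hσmem.1 (by linarith [hσmem.2]) htT _ hh)
      (hsub t T (by linarith) htT le_rfl _ hh)
    have hnn1 : 0 ≤ ∫ s in σ..(t - ℓ), (F (ystar s) (m s) - F a₀ (m s)) :=
      intervalIntegral.integral_nonneg hσmem.2 (fun u _ => hh0 u)
    have hnn2 : 0 ≤ ∫ s in t..T, (F (ystar s) (m s) - F a₀ (m s)) :=
      intervalIntegral.integral_nonneg htT (fun u _ => hh0 u)
    linarith
  have hfinsplit : (∫ s in σ..T, (‖deriv ystar s‖ ^ 2 / 2
      + (F (ystar s) (m s) - F a₀ (m s))))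
      = (∫ s in σ..T, ‖deriv ystar s‖ ^ 2 / 2)
        + ∫ s in σ..T, (F (ystar s) (m s) - F a₀ (m s)) :=
    intervalIntegral.integral_add (hsub σ T hσmem.1 hσT le_rfl _ hkin)
      (hsub σ T hσmem.1 hσT le_rfl _ hh)
  have hknn : 0 ≤ ∫ s in σ..T, ‖deriv ystar s‖ ^ 2 / 2 :=
    intervalIntegral.integral_nonneg hσT (fun u _ => by positivity)
  nlinarith [mul_pos hγ2 hℓpos]
end
end

section
/- Under the standing assumptions, suppose additionally that there is c_* ∈ ℝ with inf_{z∈ℝⁿ} F(z,μ) = c_* for every μ ∈ P(ℝⁿ), and set M := sup_{x,μ} |F(x,μ)|. Let u^T be the value function associated with the equilibrium flow m^T. Then for every T > 1, x ∈ ℝⁿ and t ∈ [0,T): |u^T(x,t)/(T−t) − c_*| ≤ √(4M) · dist(x,𝒜)/(T−t); equivalently |u^T(x,t) − (T−t) c_*| ≤ √(4M) · dist(x,𝒜). In particular u^T(x,t)/(T−t) → c_* as T → ∞, locally uniformly in (x,t) ∈ ℝⁿ × [0,T). -/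
open MeasureTheory Set Filter Metric Topology

noncomputable section

/-- Support of a probability measure. -/
def msupp {n : ℕ} (μ : Pn n) : Set (En n) := {x | ∀ U ∈ nhds x, μ.toMeasure U ≠ 0}

/-- A Lagrangian equilibrium of the finite-horizon mean field game. -/
def IsEquilibrium {n : ℕ} (F : En n → Pn n → ℝ) (K₀ : Set (En n)) (m₀ : Pn n) (T : ℝ)
    (m : ℝ → Pn n) (Φ : En n → ℝ → En n) : Prop :=
  ContinuousOn m (Set.Icc 0 T) ∧
  (∀ x ∈ K₀, Adm 0 T x (Φ x) ∧
    ∀ y : ℝ → En n, Adm 0 T x y → action F m 0 T (Φ x) ≤ action F m 0 T y) ∧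
  (∀ s ∈ Set.Icc (0:ℝ) T,
    (m s : Measure (En n)) = Measure.map (fun x => Φ x s) (m₀ : Measure (En n)))


lemma aemeas_Fcomp {n : ℕ} (F : En n → Pn n → ℝ)
    (hFx : ∀ μ : Pn n, Continuous fun x => F x μ)
    (hFm : ∀ x : En n, Continuous fun μ : Pn n => F x μ)
    {mfl : ℝ → Pn n} {T a b : ℝ} (h0a : 0 ≤ a) (hab : a ≤ b) (hbT : b ≤ T)
    (hm : ContinuousOn mfl (Set.Icc 0 T))
    {y : ℝ → En n} (hy : Continuous y) :
    AEMeasurable (fun s => F (y s) (mfl s)) (volume.restrict (Set.Ioc a b)) := by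
  set q : ℕ → ℝ → ℝ := fun k s => max a (min b (((⌊s * 2 ^ k⌋ : ℤ) : ℝ) / 2 ^ k)) with hqdef
  have hqmeas : ∀ k, Measurable (q k) := by
    intro k
    apply measurable_const.max
    apply measurable_const.min
    exact ((measurable_from_top.comp
      (Int.measurable_floor.comp (measurable_id.mul_const _))).div_const _)
  have hqrange : ∀ k, (Set.range (q k)).Countable := by
    intro k
    apply Set.Countable.mono _
      (((Set.countable_range (fun z : ℤ => ((z : ℝ) / 2 ^ k))).insert b).insert a)
    rintro w ⟨s, rfl⟩
    simp only [Set.mem_insert_iff, Set.mem_range, hqdef]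
    rcases le_total (min b (((⌊s * 2 ^ k⌋ : ℤ) : ℝ) / 2 ^ k)) a with h | h
    · left; exact (max_eq_left h)
    · rw [max_eq_right h]
      rcases le_total b (((⌊s * 2 ^ k⌋ : ℤ) : ℝ) / 2 ^ k) with h2 | h2
      · right; left; exact (min_eq_left h2)
      · right; right; exact ⟨_, (min_eq_right h2).symm⟩
  have hqmem : ∀ k s, q k s ∈ Set.Icc 0 T := by
    intro k s
    constructor
    · exact le_trans h0a (le_max_left _ _)
    · exact le_trans (max_le hab (min_le_left _ _)) hbT
  have hkmeas : ∀ k, Measurable (fun s => F (y s) (mfl (q k s))) := by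
    intro k
    have hcnt : (Set.range (q k)).Countable := hqrange k
    have : Countable (Set.range (q k)) := hcnt.to_subtype
    have hprod : Measurable (fun p : ℝ × (Set.range (q k)) => F (y p.1) (mfl p.2)) :=
      measurable_from_prod_countable_left (fun c => ((hFx (mfl c)).comp hy).measurable)
    have hmk : Measurable (fun s : ℝ => (⟨q k s, Set.mem_range_self s⟩ : Set.range (q k))) :=
      (hqmeas k).subtype_mk
    exact hprod.comp (measurable_id.prodMk hmk)
  apply aemeasurable_of_tendsto_metrizable_ae atTop (fun k => (hkmeas k).aemeasurable)
  filter_upwards [ae_restrict_mem measurableSet_Ioc] with s hs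
  have hsq : Tendsto (fun k => q k s) atTop (𝓝 s) := by
    have hlow : ∀ k : ℕ, s - (1/2 : ℝ) ^ k ≤ q k s := by
      intro k
      have h2k : (0:ℝ) < 2 ^ k := by positivity
      have hfl : s - (1/2:ℝ) ^ k ≤ ((⌊s * 2 ^ k⌋ : ℤ) : ℝ) / 2 ^ k := by
        rw [le_div_iff₀ h2k]
        have := Int.lt_floor_add_one (s * 2 ^ k)
        have h1 : ((1:ℝ)/2) ^ k = 1 / 2 ^ k := by rw [div_pow, one_pow]
        rw [h1]
        rw [sub_mul, div_mul_cancel₀ _ h2k.ne']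
        linarith
      calc s - (1/2:ℝ) ^ k = min b (s - (1/2:ℝ)^k) := by
            rw [min_eq_right]
            have : (0:ℝ) < (1/2:ℝ)^k := by positivity
            linarith [hs.2]
        _ ≤ min b (((⌊s * 2 ^ k⌋ : ℤ) : ℝ) / 2 ^ k) := min_le_min le_rfl hfl
        _ ≤ q k s := le_max_right _ _
    have hup : ∀ k : ℕ, q k s ≤ s := by
      intro k
      have h2k : (0:ℝ) < 2 ^ k := by positivity
      apply max_le (le_of_lt hs.1)
      refine le_trans (min_le_right _ _) ?_
      rw [div_le_iff₀ h2k]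
      exact Int.floor_le (s * 2 ^ k)
    have hlim : Tendsto (fun k : ℕ => s - (1/2:ℝ) ^ k) atTop (𝓝 s) := by
      have := tendsto_pow_atTop_nhds_zero_of_lt_one (by norm_num : (0:ℝ) ≤ 1/2) (by norm_num : (1/2:ℝ) < 1)
      simpa using tendsto_const_nhds.sub this
    exact tendsto_of_tendsto_of_tendsto_of_le_of_le hlim tendsto_const_nhds hlow hup
  have h1 : Tendsto (fun k => q k s) atTop (𝓝[Set.Icc 0 T] s) :=
    tendsto_nhdsWithin_of_tendsto_nhds_of_eventually_within _ hsq
      (Filter.Eventually.of_forall (fun k => hqmem k s))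
  have hsmem : s ∈ Set.Icc 0 T := ⟨le_trans h0a hs.1.le, le_trans hs.2 hbT⟩
  have h2 : Tendsto (fun k => mfl (q k s)) atTop (𝓝 (mfl s)) := (hm s hsmem).tendsto.comp h1
  exact ((hFm (y s)).tendsto (mfl s)).comp h2

lemma integrable_integrand {n : ℕ} (F : En n → Pn n → ℝ)
    (M : ℝ) (hM : ∀ (x : En n) (μ : Pn n), |F x μ| ≤ M)
    (hFx : ∀ μ : Pn n, Continuous fun x => F x μ)
    (hFm : ∀ x : En n, Continuous fun μ : Pn n => F x μ)
    {mfl : ℝ → Pn n} {T a b : ℝ} (h0a : 0 ≤ a) (hab : a ≤ b) (hbT : b ≤ T)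
    (hm : ContinuousOn mfl (Set.Icc 0 T))
    {y : ℝ → En n} {L : NNReal} (hy : LipschitzOnWith L y (Set.Icc a b)) :
    IntervalIntegrable (fun s => ‖deriv y s‖ ^ 2 / 2 + F (y s) (mfl s)) volume a b := by
  rw [intervalIntegrable_iff_integrableOn_Ioc_of_le hab]
  set Y : ℝ → En n := fun s => y (max a (min b s)) with hY
  have hmaps : ∀ s : ℝ, max a (min b s) ∈ Set.Icc a b :=
    fun s => ⟨le_max_left _ _, max_le hab (min_le_left _ _)⟩
  have hYcont : Continuous Y := by
    apply hy.continuousOn.comp_continuous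
      (continuous_const.max (continuous_const.min continuous_id)) hmaps
  have hmeasF : AEMeasurable (fun s => F (Y s) (mfl s)) (volume.restrict (Set.Ioc a b)) :=
    aemeas_Fcomp F hFx hFm h0a hab hbT hm hYcont
  have hmeasF' : AEMeasurable (fun s => F (y s) (mfl s)) (volume.restrict (Set.Ioc a b)) := by
    apply hmeasF.congr
    filter_upwards [ae_restrict_mem measurableSet_Ioc] with s hs
    have : max a (min b s) = s := by rw [min_eq_right hs.2, max_eq_right hs.1.le]
    simp only [hY, this]
  have hmeas : AEStronglyMeasurable (fun s => ‖deriv y s‖ ^ 2 / 2 + F (y s) (mfl s))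
      (volume.restrict (Set.Ioc a b)) :=
    ((((measurable_deriv y).norm.pow_const 2).div_const 2).aemeasurable.add hmeasF').aestronglyMeasurable
  have hbne : ∀ᵐ s : ℝ ∂volume, s ≠ b := by
    rw [ae_iff]
    have : {s : ℝ | ¬ s ≠ b} = {b} := by ext s; simp
    rw [this]
    exact Real.volume_singleton
  have hbd : ∀ᵐ s ∂(volume.restrict (Set.Ioc a b)),
      ‖‖deriv y s‖ ^ 2 / 2 + F (y s) (mfl s)‖ ≤ (L : ℝ) ^ 2 / 2 + M := by
    filter_upwards [ae_restrict_mem measurableSet_Ioc, ae_restrict_of_ae hbne] with s hs hsb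
    have hs' : s ∈ Set.Ioo a b := ⟨hs.1, lt_of_le_of_ne hs.2 hsb⟩
    have h1 : ‖deriv y s‖ ≤ (L : ℝ) :=
      norm_deriv_le_of_lipschitzOn (isOpen_Ioo.mem_nhds hs') (hy.mono Set.Ioo_subset_Icc_self)
    have h2 : |F (y s) (mfl s)| ≤ M := hM _ _
    calc ‖‖deriv y s‖ ^ 2 / 2 + F (y s) (mfl s)‖
        ≤ ‖deriv y s‖ ^ 2 / 2 + |F (y s) (mfl s)| := by
          rw [Real.norm_eq_abs]
          refine (abs_add_le _ _).trans ?_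
          rw [abs_of_nonneg (by positivity)]
      _ ≤ (L : ℝ) ^ 2 / 2 + M := by gcongr
  exact Integrable.mono' ((integrableOn_const_iff).mpr (Or.inr measure_Ioc_lt_top)) hmeas hbd


set_option maxHeartbeats 1000000 in
/-- **Convergence of the renormalized value functions.** Under the standing assumptions
together with the condition that `inf_z F(z,μ) = c_*` for every `μ`, the value function `u^T`
of the equilibrium satisfies, for all `T > 1`, `x ∈ ℝⁿ` and `t ∈ [0,T)`:
`|u^T(x,t) − (T−t) c_*| ≤ √(4M)·dist(x,𝒜)`, equivalently
`|u^T(x,t)/(T−t) − c_*| ≤ √(4M)·dist(x,𝒜)/(T−t)`; in particular `u^T(x,t)/(T−t) → c_*` as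
`T → ∞`, locally uniformly. -/
theorem renormalized_value_function_convergence {n : ℕ} (F : En n → Pn n → ℝ)
    (M : ℝ) (hM : ∀ (x : En n) (μ : Pn n), |F x μ| ≤ M)
    (hFx : ∀ μ : Pn n, Continuous fun x => F x μ)
    (hFm : ∀ x : En n, Continuous fun μ : Pn n => F x μ)
    (𝒜 : Set (En n)) (hA_ne : 𝒜.Nonempty) (hA_closed : IsClosed 𝒜)
    (hargmin : ∀ μ : Pn n, {z : En n | ∀ w : En n, F z μ ≤ F w μ} = 𝒜)
    (γ : ℝ → ℝ) (hγ_pos : ∀ r : ℝ, 0 < r → 0 < γ r)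
    (hγ : ∀ r : ℝ, 0 < r → ∀ (z : En n) (μ : Pn n),
      r < Metric.infDist z 𝒜 → γ r ≤ F z μ - cmin F μ)
    (K₀ : Set (En n)) (hK₀ : IsCompact K₀)
    (m₀ : Pn n) (hm₀ : msupp m₀ ⊆ K₀)
    (m : ℝ → ℝ → Pn n) (Φ : ℝ → En n → ℝ → En n)
    (heq : ∀ T : ℝ, 1 < T → IsEquilibrium F K₀ m₀ T (m T) (Φ T))
    (χ' : ℝ) (hχ' : 0 < χ')
    (hLip : ∀ T : ℝ, 1 < T → ∀ x ∈ K₀,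
      LipschitzOnWith (Real.toNNReal χ') (Φ T x) (Set.Icc 0 T))
    (c_star : ℝ) (hc : ∀ μ : Pn n, cmin F μ = c_star) :
    ∀ T : ℝ, 1 < T → ∀ x : En n, ∀ t ∈ Set.Ico (0:ℝ) T,
      |valueFun F (m T) T x t - (T - t) * c_star| ≤
        Real.sqrt (4 * M) * Metric.infDist x 𝒜 ∧
      |valueFun F (m T) T x t / (T - t) - c_star| ≤
        Real.sqrt (4 * M) * Metric.infDist x 𝒜 / (T - t) := by
  intro T hT x t ht
  obtain ⟨ht0, htT⟩ := ht
  have htT' : t ≤ T := htT.le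
  have hTt : 0 < T - t := sub_pos.mpr htT
  have hmc : ContinuousOn (m T) (Set.Icc 0 T) := (heq T hT).1
  have hM0 : 0 ≤ M := (abs_nonneg _).trans (hM x (m T 0))
  have hbdd : ∀ μ : Pn n, BddBelow (Set.range fun z => F z μ) :=
    fun μ => ⟨-M, by rintro _ ⟨z, rfl⟩; exact (abs_le.mp (hM z μ)).1⟩
  have hcle : ∀ (z : En n) (μ : Pn n), c_star ≤ F z μ := fun z μ => by
    rw [← hc μ]; exact ciInf_le (hbdd μ) z
  have hcM : |c_star| ≤ M := by
    refine abs_le.mpr ⟨?_, (hcle x (m T 0)).trans (abs_le.mp (hM x (m T 0))).2⟩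
    rw [← hc (m T 0)]
    exact le_ciInf fun z => (abs_le.mp (hM z _)).1
  have hFA : ∀ a ∈ 𝒜, ∀ μ : Pn n, F a μ = c_star := by
    intro a ha μ
    have hmin : ∀ w, F a μ ≤ F w μ := by
      have h := (hargmin μ).symm ▸ ha
      exact h
    refine le_antisymm ?_ (hcle a μ)
    rw [← hc μ]
    exact le_ciInf hmin
  set d : ℝ := Metric.infDist x 𝒜 with hddef
  have hd0 : 0 ≤ d := Metric.infDist_nonneg
  set v : ℝ := Real.sqrt (4 * M) with hvdef
  have hv0 : 0 ≤ v := Real.sqrt_nonneg _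
  have hv2 : v ^ 2 = 4 * M := Real.sq_sqrt (by positivity)
  set S : Set ℝ := {c | ∃ y : ℝ → En n, Adm t T x y ∧ c = action F (m T) t T y} with hSdef
  have hval : valueFun F (m T) T x t = sInf S := rfl
  -- lower bound on all elements of S
  have hlow : ∀ c ∈ S, (T - t) * c_star ≤ c := by
    rintro c ⟨y, ⟨⟨L, hyL⟩, -⟩, rfl⟩
    have hint : IntervalIntegrable (fun s => ‖deriv y s‖ ^ 2 / 2 + F (y s) (m T s)) volume t T :=
      integrable_integrand F M hM hFx hFm ht0 htT' le_rfl hmc hyL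
    have h1 : (∫ s in t..T, c_star) ≤ action F (m T) t T y := by
      unfold action
      apply intervalIntegral.integral_mono_on htT' intervalIntegrable_const hint
      intro s _
      have h0 : (0:ℝ) ≤ ‖deriv y s‖ ^ 2 / 2 := by positivity
      linarith [hcle (y s) (m T s)]
    simpa [intervalIntegral.integral_const, smul_eq_mul] using h1
  -- constant curve
  have hadm_const : Adm t T x (fun _ => x) :=
    ⟨⟨0, ((LipschitzWith.const x : LipschitzWith 0 fun _ : ℝ => x)).lipschitzOnWith⟩, rfl⟩
  have hmem_const : action F (m T) t T (fun _ => x) ∈ S := ⟨_, hadm_const, rfl⟩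
  have hSne : S.Nonempty := ⟨_, hmem_const⟩
  have hSbdd : BddBelow S := ⟨(T - t) * c_star, hlow⟩
  have hulow : (T - t) * c_star ≤ sInf S := le_csInf hSne hlow
  have hconst_int : IntervalIntegrable
      (fun s => ‖deriv (fun _ : ℝ => x) s‖ ^ 2 / 2 + F ((fun _ : ℝ => x) s) (m T s)) volume t T :=
    integrable_integrand F M hM hFx hFm ht0 htT' le_rfl hmc
      (((LipschitzWith.const x : LipschitzWith 0 fun _ : ℝ => x)).lipschitzOnWith)
  have hconst_eq : ∀ C : ℝ, (∀ s, F x (m T s) ≤ C) →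
      action F (m T) t T (fun _ => x) ≤ (T - t) * C := by
    intro C hC
    have h1 : action F (m T) t T (fun _ => x) ≤ ∫ _ in t..T, C := by
      unfold action
      apply intervalIntegral.integral_mono_on htT' hconst_int intervalIntegrable_const
      intro s _
      simp only [deriv_const', norm_zero, ne_eq, OfNat.ofNat_ne_zero, not_false_eq_true,
        zero_pow, zero_div, zero_add]
      exact hC s
    simpa [intervalIntegral.integral_const, smul_eq_mul] using h1
  -- upper bound
  have hupp : sInf S ≤ (T - t) * c_star + v * d := by
    rcases le_or_gt (v * (T - t)) (2 * d) with hcase | hcase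
    · -- constant curve suffices
      have h1 : sInf S ≤ (T - t) * M :=
        (csInf_le hSbdd hmem_const).trans (hconst_eq M (fun s => (abs_le.mp (hM x (m T s))).2))
      have hkey : (T - t) * M ≤ (T - t) * c_star + v * d := by
        have hmul := mul_le_mul_of_nonneg_left hcase hv0
        have hcl := (abs_le.mp hcM).1
        nlinarith [hTt, hd0, hv0]
      linarith
    · have hvpos : 0 < v := by nlinarith [hd0, hTt]
      by_cases hd : d = 0
      · -- x ∈ 𝒜
        obtain ⟨a, haA, hax⟩ := hA_closed.exists_infDist_eq_dist hA_ne x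
        have hxa : x = a := by
          have : dist x a = 0 := by rw [← hax, ← hddef, hd]
          exact dist_eq_zero.mp this
        have h1 : sInf S ≤ (T - t) * c_star :=
          (csInf_le hSbdd hmem_const).trans
            (hconst_eq c_star (fun s => le_of_eq (hxa ▸ hFA a haA (m T s))))
        rw [hd]
        linarith
      · have hdpos : 0 < d := lt_of_le_of_ne hd0 (Ne.symm hd)
        obtain ⟨a, haA, hax⟩ := hA_closed.exists_infDist_eq_dist hA_ne x
        set τ : ℝ := d / v with hτdef
        have hτpos : 0 < τ := div_pos hdpos hvpos
        have hτv : τ * v = d := div_mul_cancel₀ d hvpos.ne'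
        have hτlt : τ < T - t := by
          rw [hτdef, div_lt_iff₀ hvpos]
          nlinarith
        set b : ℝ := t + τ with hbdef
        have htb : t ≤ b := by simp [hbdef]; linarith
        have hbT : b ≤ T := by simp [hbdef]; linarith
        have hb0 : 0 ≤ b := le_trans ht0 htb
        set g : ℝ → ℝ := fun s => (max t (min b s) - t) / τ with hgdef
        set y : ℝ → En n := fun s => x + g s • (a - x) with hydef
        have hyt : y t = x := by
          simp [hydef, hgdef, min_eq_right htb]
        have hdxa : ‖a - x‖ = d := by
          rw [norm_sub_rev, ← dist_eq_norm, ← hax]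
        have hyLip : LipschitzWith (Real.toNNReal v) y := by
          apply LipschitzWith.of_dist_le_mul
          intro s₁ s₂
          have hclamp : |(max t (min b s₁)) - (max t (min b s₂))| ≤ |s₁ - s₂| := by
            calc |max t (min b s₁) - max t (min b s₂)|
                = |max (min b s₁) t - max (min b s₂) t| := by rw [max_comm t, max_comm t]
              _ ≤ |min b s₁ - min b s₂| := abs_max_sub_max_le_abs _ _ _
              _ ≤ max |b - b| |s₁ - s₂| := abs_min_sub_min_le_max _ _ _ _
              _ ≤ |s₁ - s₂| := by simp
          have hsub : y s₁ - y s₂ = (g s₁ - g s₂) • (a - x) := by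
            rw [hydef]
            simp only
            rw [add_sub_add_left_eq_sub, ← sub_smul]
          have hgsub : g s₁ - g s₂ = (max t (min b s₁) - max t (min b s₂)) / τ := by
            rw [hgdef]
            simp only
            rw [div_sub_div_same, sub_sub_sub_cancel_right]
          rw [dist_eq_norm, hsub, norm_smul, Real.norm_eq_abs, hgsub, abs_div,
            abs_of_pos hτpos, hdxa, Real.coe_toNNReal _ hv0, Real.dist_eq]
          rw [div_mul_eq_mul_div, div_le_iff₀ hτpos]
          calc |max t (min b s₁) - max t (min b s₂)| * d ≤ |s₁ - s₂| * d := by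
                apply mul_le_mul_of_nonneg_right hclamp hd0
            _ = v * |s₁ - s₂| * τ := by
                rw [mul_comm v _, mul_assoc, mul_comm v τ, hτv]
        have hadm : Adm t T x y := ⟨⟨Real.toNNReal v, hyLip.lipschitzOnWith⟩, hyt⟩
        have hmem : action F (m T) t T y ∈ S := ⟨y, hadm, rfl⟩
        set H : ℝ → ℝ := fun s => ‖deriv y s‖ ^ 2 / 2 + F (y s) (m T s) with hHdef
        have hint1 : IntervalIntegrable H volume t b :=
          integrable_integrand F M hM hFx hFm ht0 htb hbT hmc (hyLip.lipschitzOnWith)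
        have hint2 : IntervalIntegrable H volume b T :=
          integrable_integrand F M hM hFx hFm hb0 hbT le_rfl hmc (hyLip.lipschitzOnWith)
        have hsplit : action F (m T) t T y = (∫ s in t..b, H s) + ∫ s in b..T, H s :=
          (intervalIntegral.integral_add_adjacent_intervals hint1 hint2).symm
        have hne : ∀ c : ℝ, ∀ᵐ s : ℝ ∂volume, s ≠ c := by
          intro c
          rw [ae_iff]
          have : {s : ℝ | ¬ s ≠ c} = {c} := by ext s; simp
          rw [this]
          exact Real.volume_singleton
        -- derivative on the open travel interval
        have hderiv1 : ∀ s ∈ Set.Ioo t b, deriv y s = (1 / τ) • (a - x) := by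
          intro s hs
          have hev : y =ᶠ[nhds s] (fun r => x + ((r - t) / τ) • (a - x)) := by
            filter_upwards [isOpen_Ioo.mem_nhds hs] with r hr
            simp [hydef, hgdef, min_eq_right hr.2.le, max_eq_right hr.1.le]
          rw [hev.deriv_eq]
          have hda : HasDerivAt (fun r : ℝ => x + ((r - t) / τ) • (a - x)) ((1 / τ) • (a - x)) s :=
            ((((hasDerivAt_id s).sub_const t).div_const τ).smul_const (a - x)).const_add x
          exact hda.deriv
        have hp1 : (∫ s in t..b, H s) ≤ (b - t) * (v ^ 2 / 2 + M) := by
          have hub : ∀ᵐ s ∂(volume.restrict (Set.Icc t b)), H s ≤ v ^ 2 / 2 + M := by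
            filter_upwards [ae_restrict_mem measurableSet_Icc, ae_restrict_of_ae (hne t),
              ae_restrict_of_ae (hne b)] with s hs hst hsb
            have hs' : s ∈ Set.Ioo t b :=
              ⟨lt_of_le_of_ne hs.1 (Ne.symm hst), lt_of_le_of_ne hs.2 hsb⟩
            have hnd : ‖deriv y s‖ = v := by
              rw [hderiv1 s hs', norm_smul, Real.norm_eq_abs, abs_of_pos (by positivity :
                (0:ℝ) < 1 / τ), hdxa, one_div, ← div_eq_inv_mul, hτdef]
              rw [div_div_eq_mul_div, div_eq_iff hdpos.ne']
              ring
            rw [hHdef]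
            simp only [hnd]
            have := (abs_le.mp (hM (y s) (m T s))).2
            linarith
          have h1 := intervalIntegral.integral_mono_ae_restrict htb hint1
            intervalIntegrable_const hub
          calc (∫ s in t..b, H s) ≤ ∫ _ in t..b, (v ^ 2 / 2 + M) := h1
            _ = (b - t) * (v ^ 2 / 2 + M) := by
                rw [intervalIntegral.integral_const, smul_eq_mul]
        have hp2 : (∫ s in b..T, H s) = (T - b) * c_star := by
          have hya : ∀ r ∈ Set.Ioi b, y r = a := by
            intro r hr
            have hgr : g r = 1 := by
              rw [hgdef]
              simp only
              rw [min_eq_left (le_of_lt hr), max_eq_right htb, hbdef, add_sub_cancel_left,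
                div_self hτpos.ne']
            simp [hydef, hgr]
          have hcongr : ∫ s in b..T, H s = ∫ _ in b..T, c_star := by
            apply intervalIntegral.integral_congr_ae
            filter_upwards [hne T] with s hsT hs
            rw [Set.uIoc_of_le hbT] at hs
            have hs' : s ∈ Set.Ioo b T := ⟨hs.1, lt_of_le_of_ne hs.2 hsT⟩
            have hderiv : deriv y s = 0 := by
              have hev : y =ᶠ[nhds s] fun _ => a := by
                filter_upwards [isOpen_Ioi.mem_nhds hs'.1] with r hr using hya r hr
              rw [hev.deriv_eq, deriv_const]
            rw [hHdef]
            simp only [hderiv, norm_zero, ne_eq, OfNat.ofNat_ne_zero, not_false_eq_true,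
              zero_pow, zero_div, zero_add]
            rw [hya s hs'.1, hFA a haA]
          rw [hcongr, intervalIntegral.integral_const, smul_eq_mul]
        have hbt : b - t = τ := by rw [hbdef]; ring
        have haction : action F (m T) t T y ≤ τ * (v ^ 2 / 2 + M) + (T - b) * c_star := by
          rw [hsplit, hp2]
          rw [hbt] at hp1
          linarith
        have hfinal : τ * (v ^ 2 / 2 + M) + (T - b) * c_star ≤ (T - t) * c_star + v * d := by
          have hcl := (abs_le.mp hcM).1
          have hb' : T - b = T - t - τ := by rw [hbdef]; ring
          rw [hb']
          nlinarith [mul_nonneg hτpos.le (by linarith : (0:ℝ) ≤ c_star + M), hτv, hv2]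
        exact (csInf_le hSbdd hmem).trans (haction.trans hfinal)
  -- conclude
  rw [hval]
  have key : |sInf S - (T - t) * c_star| ≤ v * d := by
    rw [abs_le]
    constructor
    · have : 0 ≤ v * d := mul_nonneg hv0 hd0
      linarith
    · linarith
  refine ⟨key, ?_⟩
  have heq2 : sInf S / (T - t) - c_star = (sInf S - (T - t) * c_star) / (T - t) := by
    field_simp
  rw [heq2, abs_div, abs_of_pos hTt]
  gcongr
end
end

section
/- Under the standing assumptions together with the condition that inf_{z∈ℝⁿ} F(z,μ) = c_* for every μ ∈ P(ℝⁿ), set M := sup_{x,μ}|F(x,μ)| and let u^T be the value function associated with the equilibrium flow m^T. Then for every R > 0 there is a constant C(R) (one may take C(R) = √(4M) · sup_{|x|≤R} dist(x,𝒜)) such that for all T > 1: sup_{s ∈ [0,1]} sup_{|x| ≤ R} | u^T(x, sT)/T − c_*(1−s) | ≤ C(R)/T. -/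
open MeasureTheory Set Filter Metric Topology

noncomputable section

lemma aemeasurable_comp_int {μ : Measure ℝ} {f : ℤ → ℝ → ℝ} (hf : ∀ j, AEMeasurable (f j) μ)
    {e : ℝ → ℤ} (he : Measurable e) : AEMeasurable (fun s => f (e s) s) μ := by
  classical
  refine ⟨fun s => (hf (e s)).mk _ s, ?_, ?_⟩
  · have h1 : Measurable fun p : ℝ × ℤ => (hf p.2).mk _ p.1 :=
      measurable_from_prod_countable_left fun j => (hf j).measurable_mk
    exact h1.comp (measurable_id.prodMk he)
  · have h2 : ∀ᵐ s ∂μ, ∀ j, f j s = (hf j).mk _ s := ae_all_iff.2 fun j => (hf j).ae_eq_mk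
    filter_upwards [h2] with s hs using hs (e s)

lemma aemeasurable_F_comp {n : ℕ} (F : En n → Pn n → ℝ)
    (hFx : ∀ μ : Pn n, Continuous fun x => F x μ)
    (hFm : ∀ x : En n, Continuous fun μ : Pn n => F x μ)
    {m : ℝ → Pn n} {t T : ℝ} (hm : ContinuousOn m (Icc t T))
    {y : ℝ → En n} {L : NNReal} (hy : LipschitzOnWith L y (Icc t T)) :
    AEMeasurable (fun s => F (y s) (m s)) (volume.restrict (Ioc t T)) := by
  set ν := volume.restrict (Ioc t T) with hν
  have hgk : ∀ k : ℕ, AEMeasurable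
      (fun s => F (y (t + (⌊(s - t) * (k+1)⌋ : ℤ) / (k+1))) (m s)) ν := by
    intro k
    refine aemeasurable_comp_int (f := fun j s => F (y (t + (j : ℝ)/(k+1))) (m s)) ?_ ?_
    · intro j
      have hc : ContinuousOn (fun s => F (y (t + (j:ℝ)/(k+1))) (m s)) (Icc t T) :=
        (hFm _).comp_continuousOn hm
      exact (hc.aemeasurable measurableSet_Icc).mono_measure
        (Measure.restrict_mono Ioc_subset_Icc_self le_rfl)
    · exact Int.measurable_floor.comp ((measurable_id.sub_const t).mul_const _)
  refine aemeasurable_of_tendsto_metrizable_ae atTop hgk ?_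
  filter_upwards [ae_restrict_mem measurableSet_Ioc] with s hs
  have hst : 0 < s - t := sub_pos.2 hs.1
  set q : ℕ → ℝ := fun k => t + (⌊(s - t) * (k+1)⌋ : ℤ) / (k+1) with hq
  have hqmem : ∀ k, q k ∈ Icc t T := by
    intro k
    have hk : (0:ℝ) < (k:ℝ) + 1 := by positivity
    constructor
    · have : (0:ℝ) ≤ (⌊(s - t) * (k+1)⌋ : ℤ) := by
        exact_mod_cast Int.floor_nonneg.2 (by positivity)
      simp only [hq]
      nlinarith [div_nonneg this hk.le]
    · have h1 : ((⌊(s - t) * (k+1)⌋ : ℤ) : ℝ) ≤ (s - t) * (k+1) := Int.floor_le _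
      have : ((⌊(s - t) * (k+1)⌋ : ℤ) : ℝ) / (k+1) ≤ s - t := by
        rw [div_le_iff₀ hk]; linarith
      have h2 : q k ≤ s := by simp only [hq]; linarith
      exact h2.trans hs.2
  have hqs : Tendsto q atTop (𝓝 s) := by
    have hub : ∀ k : ℕ, q k ≤ s := by
      intro k
      have hk : (0:ℝ) < (k:ℝ) + 1 := by positivity
      have h1 : ((⌊(s - t) * (k+1)⌋ : ℤ) : ℝ) ≤ (s - t) * (k+1) := Int.floor_le _
      have : ((⌊(s - t) * (k+1)⌋ : ℤ) : ℝ) / (k+1) ≤ s - t := by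
        rw [div_le_iff₀ hk]; linarith
      simp only [hq]; linarith
    have hlb : ∀ k : ℕ, s - 1/((k:ℝ)+1) ≤ q k := by
      intro k
      have hk : (0:ℝ) < (k:ℝ) + 1 := by positivity
      have h1 : (s - t) * (k+1) - 1 ≤ ((⌊(s - t) * (k+1)⌋ : ℤ) : ℝ) := by
        have := Int.sub_one_lt_floor ((s - t) * (k+1))
        linarith
      have h3 : ((s - t) * ((k:ℝ)+1) - 1)/((k:ℝ)+1) ≤ ((⌊(s - t) * (k+1)⌋ : ℤ) : ℝ) / (k+1) := by
        gcongr
      have h4 : ((s - t) * ((k:ℝ)+1) - 1)/((k:ℝ)+1) = (s-t) - 1/((k:ℝ)+1) := by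
        field_simp
      simp only [hq]; rw [h4] at h3; linarith
    have h0 : Tendsto (fun k : ℕ => s - 1/((k:ℝ)+1)) atTop (𝓝 s) := by
      have := tendsto_one_div_add_atTop_nhds_zero_nat (𝕜 := ℝ)
      have h2 := Tendsto.const_sub s this
      simpa using h2
    exact tendsto_of_tendsto_of_tendsto_of_le_of_le h0 tendsto_const_nhds hlb hub
  have hy_cont : Tendsto (fun k => y (q k)) atTop (𝓝 (y s)) := by
    have hcw : ContinuousWithinAt y (Icc t T) s :=
      hy.continuousOn s ⟨hs.1.le.trans (le_refl s) |>.trans (le_refl s), hs.2⟩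
    have : Tendsto q atTop (𝓝[Icc t T] s) :=
      tendsto_nhdsWithin_of_tendsto_nhds_of_eventually_within _ hqs
        (Eventually.of_forall hqmem)
    exact hcw.tendsto.comp this
  exact ((hFx (m s)).tendsto (y s)).comp hy_cont

lemma norm_deriv_le_on {y : ℝ → En n} {L : NNReal} {a b : ℝ} (hy : LipschitzOnWith L y (Icc a b))
    {s : ℝ} (hs : s ∈ Ioo a b) : ‖deriv y s‖ ≤ L :=
  norm_deriv_le_of_lipschitzOn (Icc_mem_nhds hs.1 hs.2) hy

lemma integrand_integrable {n : ℕ} (F : En n → Pn n → ℝ)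
    (M : ℝ) (hM : ∀ (x : En n) (μ : Pn n), |F x μ| ≤ M)
    (hFx : ∀ μ : Pn n, Continuous fun x => F x μ)
    (hFm : ∀ x : En n, Continuous fun μ : Pn n => F x μ)
    {m : ℝ → Pn n} {t T : ℝ} (htT : t ≤ T) (hm : ContinuousOn m (Icc t T))
    {y : ℝ → En n} {L : NNReal} (hy : LipschitzOnWith L y (Icc t T)) :
    IntervalIntegrable (fun s => ‖deriv y s‖ ^ 2 / 2 + F (y s) (m s)) volume t T := by
  rw [intervalIntegrable_iff, uIoc_of_le htT]
  have hkin : AEMeasurable (fun s => ‖deriv y s‖ ^ 2 / 2) (volume.restrict (Ioc t T)) :=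
    ((((measurable_deriv y).norm).pow_const 2).div_const 2).aemeasurable
  have hg := aemeasurable_F_comp F hFx hFm hm hy
  have hmeas : AEStronglyMeasurable (fun s => ‖deriv y s‖ ^ 2 / 2 + F (y s) (m s))
      (volume.restrict (Ioc t T)) := (hkin.add hg).aestronglyMeasurable
  refine Integrable.mono' (g := fun _ => (L:ℝ)^2/2 + M)
    (integrableOn_const measure_Ioc_lt_top.ne) hmeas ?_
  have hT : ∀ᵐ s ∂(volume.restrict (Ioc t T)), s ≠ T := by
    refine ae_iff.2 ?_
    have he : {a : ℝ | ¬ a ≠ T} = {T} := by ext a; simp [eq_comm]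
    rw [he, Measure.restrict_apply (measurableSet_singleton T)]
    exact measure_mono_null inter_subset_left Real.volume_singleton
  filter_upwards [ae_restrict_mem measurableSet_Ioc, hT] with s hs hsT
  have hso : s ∈ Ioo t T := ⟨hs.1, lt_of_le_of_ne hs.2 hsT⟩
  have h1 : ‖deriv y s‖ ≤ L := norm_deriv_le_on hy hso
  have h2 : ‖deriv y s‖ ^ 2 / 2 ≤ (L:ℝ)^2/2 := by
    have := pow_le_pow_left₀ (norm_nonneg _) h1 2
    linarith
  have h3 : |F (y s) (m s)| ≤ M := hM _ _
  have h0 : 0 ≤ ‖deriv y s‖ ^ 2 / 2 := by positivity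
  rw [Real.norm_eq_abs]
  rw [abs_le] at h3 ⊢
  constructor <;> nlinarith [h3.1, h3.2]

lemma action_lower_bound {n : ℕ} (F : En n → Pn n → ℝ) {c_star : ℝ}
    (hcl : ∀ (z : En n) (μ : Pn n), c_star ≤ F z μ)
    {m : ℝ → Pn n} {t T : ℝ} (htT : t ≤ T) {y : ℝ → En n}
    (hI : IntervalIntegrable (fun s => ‖deriv y s‖ ^ 2 / 2 + F (y s) (m s)) volume t T) :
    c_star * (T - t) ≤ action F m t T y := by
  have h := intervalIntegral.integral_mono_on htT intervalIntegrable_const hI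
    (f := fun _ => c_star) (fun s _ => by
      have h0 : (0:ℝ) ≤ ‖deriv y s‖ ^ 2 / 2 := by positivity
      have := hcl (y s) (m s); linarith)
  rw [intervalIntegral.integral_const, smul_eq_mul] at h
  rw [action, mul_comm]
  exact h

set_option maxHeartbeats 2000000 in
/-- **Rate of convergence of order `1/T` for the long-time limit.** Under the standing
assumptions and `inf_z F(z,μ) = c_*` for every `μ`, for every `R > 0` there is a constant
`C(R)` such that for all `T > 1`:
`sup_{s∈[0,1]} sup_{|x|≤R} |u^T(x,sT)/T − c_*(1−s)| ≤ C(R)/T`. -/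
theorem rate_of_convergence_one_over_T {n : ℕ} (F : En n → Pn n → ℝ)
    (M : ℝ) (hM : ∀ (x : En n) (μ : Pn n), |F x μ| ≤ M)
    (hFx : ∀ μ : Pn n, Continuous fun x => F x μ)
    (hFm : ∀ x : En n, Continuous fun μ : Pn n => F x μ)
    (𝒜 : Set (En n)) (hA_ne : 𝒜.Nonempty) (hA_closed : IsClosed 𝒜)
    (hargmin : ∀ μ : Pn n, {z : En n | ∀ w : En n, F z μ ≤ F w μ} = 𝒜)
    (γ : ℝ → ℝ) (hγ_pos : ∀ r : ℝ, 0 < r → 0 < γ r)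
    (hγ : ∀ r : ℝ, 0 < r → ∀ (z : En n) (μ : Pn n),
      r < Metric.infDist z 𝒜 → γ r ≤ F z μ - cmin F μ)
    (K₀ : Set (En n)) (hK₀ : IsCompact K₀)
    (m₀ : Pn n) (hm₀ : msupp m₀ ⊆ K₀)
    (m : ℝ → ℝ → Pn n) (Φ : ℝ → En n → ℝ → En n)
    (heq : ∀ T : ℝ, 1 < T → IsEquilibrium F K₀ m₀ T (m T) (Φ T))
    (χ' : ℝ) (hχ' : 0 < χ')
    (hLip : ∀ T : ℝ, 1 < T → ∀ x ∈ K₀,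
      LipschitzOnWith (Real.toNNReal χ') (Φ T x) (Set.Icc 0 T))
    (c_star : ℝ) (hc : ∀ μ : Pn n, cmin F μ = c_star) :
    ∀ R : ℝ, 0 < R → ∃ C : ℝ,
      ∀ T : ℝ, 1 < T → ∀ s ∈ Set.Icc (0:ℝ) 1, ∀ x : En n, ‖x‖ ≤ R →
        |valueFun F (m T) T x (s * T) / T - c_star * (1 - s)| ≤ C / T := by
  obtain ⟨a₀, ha₀⟩ := hA_ne
  have hbdd : ∀ μ : Pn n, BddBelow (Set.range fun z => F z μ) := fun μ =>
    ⟨-M, by rintro r ⟨z, rfl⟩; have := hM z μ; rw [abs_le] at this; linarith⟩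
  have hcl : ∀ (z : En n) (μ : Pn n), c_star ≤ F z μ := by
    intro z μ; rw [← hc μ]; exact ciInf_le (hbdd μ) z
  have hFa : ∀ μ : Pn n, F a₀ μ = c_star := by
    intro μ
    have hmem : a₀ ∈ {z : En n | ∀ w : En n, F z μ ≤ F w μ} := by rw [hargmin μ]; exact ha₀
    refine le_antisymm ?_ (hcl a₀ μ)
    rw [← hc μ]; exact le_ciInf hmem
  have hcM : |c_star| ≤ M := by
    have μ₀ : Pn n := ⟨Measure.dirac 0, inferInstance⟩
    calc |c_star| = |F a₀ μ₀| := by rw [hFa μ₀]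
    _ ≤ M := hM _ _
  have hM0 : 0 ≤ M := le_trans (abs_nonneg _) hcM
  intro R hR
  refine ⟨(‖a₀‖ + R)^2/2 + M + |c_star|, ?_⟩
  intro T hT s hs x hx
  set D : ℝ := ‖a₀‖ + R with hDdef
  have hD0 : 0 ≤ D := by positivity
  set C : ℝ := D^2/2 + M + |c_star| with hCdef
  have hC0 : 0 ≤ C := by positivity
  have hT0 : (0:ℝ) < T := lt_trans one_pos hT
  set t := s * T with ht
  have ht0 : 0 ≤ t := mul_nonneg hs.1 hT0.le
  have htT : t ≤ T := by nlinarith [hs.2]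
  obtain ⟨hmc, -, -⟩ := heq T hT
  have hm' : ContinuousOn (m T) (Icc t T) := hmc.mono (Icc_subset_Icc ht0 le_rfl)
  set S : Set ℝ := {c | ∃ y : ℝ → En n, Adm t T x y ∧ c = action F (m T) t T y} with hSdef
  have hval_eq : valueFun F (m T) T x t = sInf S := rfl
  clear_value t D C
  have hLB : ∀ c ∈ S, c_star * (T - t) ≤ c := by
    rintro c ⟨y, ⟨⟨L, hy⟩, -⟩, rfl⟩
    exact action_lower_bound F hcl htT (integrand_integrable F M hM hFx hFm htT hm' hy)
  have hconstAdm : Adm t T x (fun _ : ℝ => x) :=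
    ⟨⟨0, (LipschitzWith.const x).lipschitzOnWith⟩, rfl⟩
  have hSne : S.Nonempty := ⟨action F (m T) t T (fun _ => x), ⟨_, hconstAdm, rfl⟩⟩
  have hBdd : BddBelow S := ⟨c_star * (T - t), hLB⟩
  have hlow : c_star * (T - t) ≤ valueFun F (m T) T x t := by
    rw [hval_eq]; exact le_csInf hSne hLB
  have hupper : valueFun F (m T) T x t ≤ c_star * (T - t) + C := by
    rcases le_or_gt T (t + 1) with h1 | h2
    · -- short remaining horizon: use the constant curve
      have hval : valueFun F (m T) T x t ≤ action F (m T) t T (fun _ => x) := by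
        rw [hval_eq]; exact csInf_le hBdd ⟨_, hconstAdm, rfl⟩
      have heq0 : action F (m T) t T (fun _ => x)
          = ∫ u in t..T, F x (m T u) := by
        rw [action]
        congr 1
        funext u
        simp [deriv_const']
      have hcont : ContinuousOn (fun u => F x (m T u)) (Icc t T) :=
        (hFm x).comp_continuousOn hm'
      have hii : IntervalIntegrable (fun u => F x (m T u)) volume t T := by
        apply ContinuousOn.intervalIntegrable
        rwa [uIcc_of_le htT]
      have hact : action F (m T) t T (fun _ => x) ≤ M * (T - t) := by
        rw [heq0]
        have := intervalIntegral.integral_mono_on htT hii intervalIntegrable_const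
          (g := fun _ => M) (fun u _ => (abs_le.1 (hM x (m T u))).2)
        rw [intervalIntegral.integral_const, smul_eq_mul] at this
        linarith [this]
      have h5 : -c_star ≤ |c_star| := neg_le_abs c_star
      have h6 : 0 ≤ (M + |c_star|) * (1 - (T - t)) :=
        mul_nonneg (by positivity) (by linarith)
      have h7 : 0 ≤ T - t := by linarith
      have h8 : 0 ≤ ((M + |c_star|) - (M - c_star)) * (T - t) :=
        mul_nonneg (by linarith) h7
      have h9 : 0 ≤ D^2/2 := by positivity
      have h10a : (M - c_star)*(T-t) ≤ (M+|c_star|)*(T-t) :=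
        mul_le_mul_of_nonneg_right (by linarith) h7
      have h10 : M*(T-t) ≤ c_star*(T-t) + (M+|c_star|) := by nlinarith [h10a, h6]
      have hCge : D^2/2 + M + |c_star| ≤ C := le_of_eq hCdef.symm
      calc valueFun F (m T) T x t ≤ action F (m T) t T (fun _ => x) := hval
      _ ≤ M * (T - t) := hact
      _ ≤ c_star * (T - t) + (M + |c_star|) := h10
      _ ≤ c_star * (T - t) + C := by linarith only [h9, hCge]
    · -- long remaining horizon: go to a₀ in unit time, then stay
      set v : En n := a₀ - x with hvdef
      have hvD : ‖v‖ ≤ D := by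
        rw [hvdef]
        calc ‖a₀ - x‖ ≤ ‖a₀‖ + ‖x‖ := norm_sub_le _ _
        _ ≤ D := by rw [hDdef]; linarith
      set y₁ : ℝ → En n := fun u => x + min (u - t) 1 • v with hy₁def
      clear_value v y₁
      have key : ∀ a b : ℝ, min a 1 - min b 1 ≤ |a - b| := by
        intro a b
        rcases le_total a 1 with ha | ha
        · rw [min_eq_left ha]
          rcases le_total b 1 with hb | hb
          · rw [min_eq_left hb]; exact le_abs_self _
          · rw [min_eq_right hb]
            calc a - 1 ≤ 0 := by linarith
            _ ≤ |a - b| := abs_nonneg _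
        · rw [min_eq_right ha]
          rcases le_total b 1 with hb | hb
          · rw [min_eq_left hb]
            calc 1 - b ≤ a - b := by linarith
            _ ≤ |a - b| := le_abs_self _
          · rw [min_eq_right hb]; simp [abs_nonneg]
      have hmin : ∀ a b : ℝ, |min a 1 - min b 1| ≤ |a - b| := fun a b =>
        abs_sub_le_iff.2 ⟨key a b, by rw [abs_sub_comm]; exact key b a⟩
      have hy₁lip : LipschitzOnWith ‖v‖₊ y₁ (Icc t T) := by
        apply LipschitzWith.lipschitzOnWith
        apply LipschitzWith.of_dist_le_mul
        intro p q
        have hdiff : y₁ p - y₁ q = (min (p - t) 1 - min (q - t) 1) • v := by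
          rw [hy₁def]; simp only [add_sub_add_left_eq_sub, sub_smul]
        rw [dist_eq_norm, hdiff, norm_smul, Real.norm_eq_abs, Real.dist_eq, coe_nnnorm]
        rw [mul_comm]
        apply mul_le_mul_of_nonneg_left _ (norm_nonneg v)
        calc |min (p - t) 1 - min (q - t) 1| ≤ |(p - t) - (q - t)| := hmin _ _
        _ = |p - q| := by ring_nf
      have hy₁t : y₁ t = x := by
        rw [hy₁def]; simp
      have hderiv1 : ∀ u : ℝ, u < t + 1 → deriv y₁ u = v := by
        intro u hu
        have hev : y₁ =ᶠ[𝓝 u] fun w => x + (w - t) • v := by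
          filter_upwards [Iio_mem_nhds hu] with w hw
          rw [hy₁def]
          simp only
          rw [min_eq_left (by simp only [mem_Iio] at hw; linarith : w - t ≤ 1)]
        rw [hev.deriv_eq]
        have h := (((hasDerivAt_id u).sub_const t).smul_const v).const_add x
        simpa using h.deriv
      have hy₁a : ∀ u : ℝ, t + 1 < u → y₁ u = a₀ := by
        intro u hu
        rw [hy₁def]
        simp only
        rw [min_eq_right (by linarith : (1:ℝ) ≤ u - t), one_smul, hvdef]
        abel
      have hderiv2 : ∀ u : ℝ, t + 1 < u → deriv y₁ u = 0 := by
        intro u hu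
        have hev : y₁ =ᶠ[𝓝 u] fun _ => a₀ := by
          filter_upwards [Ioi_mem_nhds hu] with w hw using hy₁a w hw
        rw [hev.deriv_eq, deriv_const]
      have hI : IntervalIntegrable (fun u => ‖deriv y₁ u‖^2/2 + F (y₁ u) (m T u)) volume t T :=
        integrand_integrable F M hM hFx hFm htT hm' hy₁lip
      have ht1 : t ≤ t + 1 := by linarith
      have h2' : t + 1 ≤ T := h2.le
      have hI1 : IntervalIntegrable (fun u => ‖deriv y₁ u‖^2/2 + F (y₁ u) (m T u))
          volume t (t+1) := hI.mono_set
        (by rw [uIcc_of_le ht1, uIcc_of_le htT]; exact Icc_subset_Icc le_rfl h2')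
      have hI2 : IntervalIntegrable (fun u => ‖deriv y₁ u‖^2/2 + F (y₁ u) (m T u))
          volume (t+1) T := hI.mono_set
        (by rw [uIcc_of_le h2', uIcc_of_le htT]; exact Icc_subset_Icc (by linarith) le_rfl)
      have hsplit : action F (m T) t T y₁
          = (∫ u in t..(t+1), (‖deriv y₁ u‖^2/2 + F (y₁ u) (m T u)))
            + ∫ u in (t+1)..T, (‖deriv y₁ u‖^2/2 + F (y₁ u) (m T u)) :=
        (intervalIntegral.integral_add_adjacent_intervals hI1 hI2).symm
      have hp1 : (∫ u in t..(t+1), (‖deriv y₁ u‖^2/2 + F (y₁ u) (m T u))) ≤ D^2/2 + M := by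
        have hU : ∀ᵐ u ∂(volume.restrict (Icc t (t+1))), u ≠ t + 1 := by
          refine ae_iff.2 ?_
          have he : {a : ℝ | ¬ a ≠ t + 1} = {t + 1} := by ext a; simp [eq_comm]
          rw [he, Measure.restrict_apply (measurableSet_singleton _)]
          exact measure_mono_null inter_subset_left Real.volume_singleton
        have hb : ∀ᵐ u ∂(volume.restrict (Icc t (t+1))),
            (‖deriv y₁ u‖^2/2 + F (y₁ u) (m T u)) ≤ D^2/2 + M := by
          filter_upwards [hU] with u hu
          have hdb : ‖deriv y₁ u‖ ≤ D := by
            rcases lt_or_gt_of_ne hu with h | h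
            · rw [hderiv1 u h]; exact hvD
            · rw [hderiv2 u h]; simpa using hD0
          have hFb := (abs_le.1 (hM (y₁ u) (m T u))).2
          have hsq : ‖deriv y₁ u‖^2 ≤ D^2 := by
            nlinarith [norm_nonneg (deriv y₁ u)]
          exact add_le_add (by linarith only [hsq]) hFb
        have := intervalIntegral.integral_mono_ae_restrict ht1 hI1 intervalIntegrable_const hb
        rw [intervalIntegral.integral_const, smul_eq_mul] at this
        simpa using this
      have hp2 : (∫ u in (t+1)..T, (‖deriv y₁ u‖^2/2 + F (y₁ u) (m T u)))
          = c_star * (T - (t+1)) := by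
        have hcg : ∀ᵐ u ∂(volume : Measure ℝ), u ∈ Set.uIoc (t+1) T →
            (‖deriv y₁ u‖^2/2 + F (y₁ u) (m T u)) = c_star := by
          refine Eventually.of_forall ?_
          intro u hu
          rw [uIoc_of_le h2'] at hu
          rw [hderiv2 u hu.1, hy₁a u hu.1, hFa (m T u)]
          simp
        rw [intervalIntegral.integral_congr_ae hcg, intervalIntegral.integral_const,
          smul_eq_mul, mul_comm]
      have hval : valueFun F (m T) T x t ≤ action F (m T) t T y₁ := by
        rw [hval_eq]
        exact csInf_le hBdd ⟨y₁, ⟨⟨‖v‖₊, hy₁lip⟩, hy₁t⟩, rfl⟩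
      have h5 : -c_star ≤ |c_star| := neg_le_abs c_star
      rw [hsplit] at hval
      rw [hCdef]
      linarith
  have habs : |valueFun F (m T) T x t - c_star * (T - t)| ≤ C :=
    abs_le.2 ⟨by linarith, by linarith⟩
  have hrew : valueFun F (m T) T x t / T - c_star * (1 - s)
      = (valueFun F (m T) T x t - c_star * (T - t)) / T := by
    rw [ht]; field_simp
  rw [hrew, abs_div, abs_of_pos hT0]
  gcongr
end
end
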